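/- Suppose that (G,m) is a ℤ²⋊Cs-tight gain graph that has a vertex v₀ of degree 3 with exactly 2 distinct neighbours, both different from v₀. Then it is possible to form a ℤ²⋊Cs-tight gain graph by a gained 1-reduction at v₀. -/

import Mathlib

namespace Crystal

/-- The wallpaper group `pm = ℤ² ⋊ 𝒞ₛ`.  An element is a pair of a translation
vector `t ∈ ℤ²` and a Boolean `r` recording the `𝒞ₛ`-component
(`true` = the reflection `s` in the x-axis). -/
@[ext] structure PM : Type where
  t : ℤ × ℤ
  r : Bool

namespace PM

/-- The action of the reflection component on translation vectors. -/
def act (σ : Bool) (z : ℤ × ℤ) : ℤ × ℤ := (z.1, if σ then -z.2 else z.2)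

instance : Mul PM := ⟨fun a b => ⟨a.t + act a.r b.t, xor a.r b.r⟩⟩
instance : One PM := ⟨⟨0, false⟩⟩
instance : Inv PM := ⟨fun a => ⟨act a.r (-a.t), a.r⟩⟩

lemma mul_def (a b : PM) : a * b = ⟨a.t + act a.r b.t, xor a.r b.r⟩ := rfl
lemma one_def : (1 : PM) = ⟨0, false⟩ := rfl
lemma inv_def (a : PM) : a⁻¹ = ⟨act a.r (-a.t), a.r⟩ := rfl

instance : Group PM where
  mul_assoc a b c := by
    obtain ⟨⟨x1, x2⟩, ra⟩ := a
    obtain ⟨⟨y1, y2⟩, rb⟩ := b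
    obtain ⟨⟨z1, z2⟩, rc⟩ := c
    cases ra <;> cases rb <;> cases rc <;>
      simp [mul_def, act, Prod.ext_iff] <;> omega
  one_mul a := by
    obtain ⟨⟨x1, x2⟩, ra⟩ := a
    cases ra <;> simp [mul_def, one_def, act]
  mul_one a := by
    obtain ⟨⟨x1, x2⟩, ra⟩ := a
    cases ra <;> simp [mul_def, one_def, act]
  inv_mul_cancel a := by
    obtain ⟨⟨x1, x2⟩, ra⟩ := a
    cases ra <;> simp [mul_def, one_def, inv_def, act, Prod.ext_iff]

/-- The affine action of `pm` on the plane: `(z,σ)·x = σ(x) + z`. -/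
noncomputable def toPlane (g : PM) (x : ℝ × ℝ) : ℝ × ℝ :=
  (x.1 + (g.t.1 : ℝ), (if g.r then -x.2 else x.2) + (g.t.2 : ℝ))

end PM

/-- A multigraph: a finite vertex set, a finite edge set, and two endpoint maps
(which also fix a reference orientation of every edge, from `fst` to `snd`).
Loops and parallel edges are allowed. -/
structure Multigraph (α β : Type) where
  verts : Finset α
  edges : Finset β
  fst : β → α
  snd : β → α
  fst_mem : ∀ e ∈ edges, fst e ∈ verts
  snd_mem : ∀ e ∈ edges, snd e ∈ verts

variable {α β : Type}

/-- `H` is a subgraph of `G`. -/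
def IsSubgraph (H G : Multigraph α β) : Prop :=
  H.verts ⊆ G.verts ∧ H.edges ⊆ G.edges ∧
    ∀ e ∈ H.edges, H.fst e = G.fst e ∧ H.snd e = G.snd e

/-- `(k,l)`-sparsity. -/
def Sparse (k l : ℕ) (G : Multigraph α β) : Prop :=
  ∀ H : Multigraph α β, IsSubgraph H G → 1 ≤ H.edges.card →
    (H.edges.card : ℤ) ≤ k * H.verts.card - l

/-- `(k,l)`-tightness. -/
def Tight (k l : ℕ) (G : Multigraph α β) : Prop :=
  Sparse k l G ∧ (G.edges.card : ℤ) = k * G.verts.card - l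

/-- The degree of a vertex: the number of edge-incidences, loops counting twice. -/
def Multigraph.degree [DecidableEq α] (G : Multigraph α β) (v : α) : ℕ :=
  ∑ e ∈ G.edges, ((if G.fst e = v then 1 else 0) + (if G.snd e = v then 1 else 0))

/-- The starting vertex of a step `(e, dir)` of a walk: `dir = true` means the
edge is traversed forwards. -/
def stepHead (G : Multigraph α β) (s : β × Bool) : α := if s.2 then G.fst s.1 else G.snd s.1

/-- The final vertex of a step of a walk. -/
def stepTail (G : Multigraph α β) (s : β × Bool) : α := if s.2 then G.snd s.1 else G.fst s.1

/-- `IsWalk G u v L` : `L` is a walk in `G` from `u` to `v`. -/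
def IsWalk (G : Multigraph α β) : α → α → List (β × Bool) → Prop
  | u, v, [] => u = v
  | u, v, s :: L => s.1 ∈ G.edges ∧ stepHead G s = u ∧ IsWalk G (stepTail G s) v L

/-- The net gain of a walk. -/
def walkGain (m : β → PM) (L : List (β × Bool)) : PM :=
  (L.map fun s => if s.2 then m s.1 else (m s.1)⁻¹).prod

/-- A gain graph is balanced if every closed walk has identity net gain. -/
def Balanced (G : Multigraph α β) (m : β → PM) : Prop :=
  ∀ u L, IsWalk G u u L → walkGain m L = 1

/-- A gain graph is purely periodic if every closed walk has net gain in the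
translation subgroup `ℤ²`. -/
def PurelyPeriodic (G : Multigraph α β) (m : β → PM) : Prop :=
  ∀ u L, IsWalk G u u L → (walkGain m L).r = false

/-- A multigraph is connected if every pair of its vertices is joined by a walk. -/
def Connected (G : Multigraph α β) : Prop :=
  ∀ u ∈ G.verts, ∀ v ∈ G.verts, ∃ L, IsWalk G u v L

/-- The conditions for `m` to be a gain assignment on `G`: parallel edges with the
same orientation get distinct gains, and loops get non-identity gains. -/
structure IsGainGraph (G : Multigraph α β) (m : β → PM) : Prop where
  parallel_ne : ∀ e ∈ G.edges, ∀ f ∈ G.edges,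
    e ≠ f → G.fst e = G.fst f → G.snd e = G.snd f → m e ≠ m f
  loop_ne_one : ∀ e ∈ G.edges, G.fst e = G.snd e → m e ≠ 1

/-- `ℤ²⋊𝒞ₛ`-tightness of a gain graph. -/
def PMTight (G : Multigraph α β) (m : β → PM) : Prop :=
  Tight 2 1 G ∧
    (∀ H : Multigraph α β, IsSubgraph H G → PurelyPeriodic H m → Sparse 2 2 H) ∧
    (∀ H : Multigraph α β, IsSubgraph H G → Balanced H m → Sparse 2 3 H)

/-- The orbit rigidity matrix of a `ℤ²⋊𝒞ₛ`-gain framework. -/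
noncomputable def orbitMatrix [DecidableEq α] (G : Multigraph α β) (m : β → PM)
    (p : α → ℝ × ℝ) :
    Matrix {e : β // e ∈ G.edges} ({v : α // v ∈ G.verts} × Fin 2) ℝ :=
  fun er vc =>
    let e : β := er.1
    let i : α := G.fst e
    let j : α := G.snd e
    let w : α := vc.1.1
    let entry : ℝ × ℝ :=
      if i = j then
        (if w = i then p i + p i - PM.toPlane (m e) (p i) - PM.toPlane (m e)⁻¹ (p i) else 0)
      else if w = i then p i - PM.toPlane (m e) (p j)
      else if w = j then p j - PM.toPlane (m e)⁻¹ (p i)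
      else 0
    if vc.2 = 0 then entry.1 else entry.2

/-- A configuration is generic if its orbit rigidity matrix has the maximum
possible rank among all configurations. -/
def Generic [DecidableEq α] (G : Multigraph α β) (m : β → PM) (p : α → ℝ × ℝ) : Prop :=
  ∀ q : α → ℝ × ℝ, (orbitMatrix G m q).rank ≤ (orbitMatrix G m p).rank

/-- A gain graph is rigid if the orbit rigidity matrix of a generic configuration
has rank `2|V| - 1`. -/
def Rigid [DecidableEq α] (G : Multigraph α β) (m : β → PM) : Prop :=
  ∃ p : α → ℝ × ℝ, Generic G m p ∧
    ((orbitMatrix G m p).rank : ℤ) = 2 * G.verts.card - 1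

/-- A gain graph is independent if the rows of the orbit rigidity matrix of a
generic configuration are linearly independent. -/
def Independent [DecidableEq α] (G : Multigraph α β) (m : β → PM) : Prop :=
  ∃ p : α → ℝ × ℝ, Generic G m p ∧
    LinearIndependent ℝ (fun er => orbitMatrix G m p er)

/-- A gain graph is minimally rigid if it is rigid and independent. -/
def MinimallyRigid [DecidableEq α] (G : Multigraph α β) (m : β → PM) : Prop :=
  Rigid G m ∧ Independent G m

/-- `e` joins `u` and `v` (in one of the two orientations). -/
def Joins (G : Multigraph α β) (e : β) (u v : α) : Prop :=
  (G.fst e = u ∧ G.snd e = v) ∨ (G.fst e = v ∧ G.snd e = u)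

/-- The gain of an edge read with `v` as its initial vertex (inverting the gain
if the edge is oriented towards `v`). -/
def gainFrom [DecidableEq α] (G : Multigraph α β) (m : β → PM) (v : α) (e : β) : PM :=
  if G.fst e = v then m e else (m e)⁻¹

/-- The endpoint of an edge other than `v` (for an edge incident with `v`). -/
def otherEnd [DecidableEq α] (G : Multigraph α β) (v : α) (e : β) : α :=
  if G.fst e = v then G.snd e else G.fst e

/-- Deletion of a vertex together with all edges incident with it. -/
def Multigraph.deleteVertex [DecidableEq α] (G : Multigraph α β) (v : α) :
    Multigraph α β where
  verts := G.verts.erase v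
  edges := G.edges.filter fun e => G.fst e ≠ v ∧ G.snd e ≠ v
  fst := G.fst
  snd := G.snd
  fst_mem := fun e he => by
    rw [Finset.mem_filter] at he
    exact Finset.mem_erase.2 ⟨he.2.1, G.fst_mem e he.1⟩
  snd_mem := fun e he => by
    rw [Finset.mem_filter] at he
    exact Finset.mem_erase.2 ⟨he.2.2, G.snd_mem e he.1⟩

/-- Addition of a new edge `f` from `u` to `v`. -/
def Multigraph.addEdge [DecidableEq α] [DecidableEq β] (G : Multigraph α β)
    (f : β) (u v : α) : Multigraph α β where
  verts := insert u (insert v G.verts)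
  edges := insert f G.edges
  fst := Function.update G.fst f u
  snd := Function.update G.snd f v
  fst_mem := fun e he => by
    by_cases hef : e = f
    · subst hef; simp
    · rw [Function.update_of_ne hef]
      have heG : e ∈ G.edges := by
        rcases Finset.mem_insert.1 he with h | h
        · exact absurd h hef
        · exact h
      exact Finset.mem_insert_of_mem (Finset.mem_insert_of_mem (G.fst_mem e heG))
  snd_mem := fun e he => by
    by_cases hef : e = f
    · subst hef; simp
    · rw [Function.update_of_ne hef]
      have heG : e ∈ G.edges := by
        rcases Finset.mem_insert.1 he with h | h
        · exact absurd h hef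
        · exact h
      exact Finset.mem_insert_of_mem (Finset.mem_insert_of_mem (G.snd_mem e heG))

/-- `(G',m')` is obtained from `(G,m)` by a gained 0-extension. -/
def IsZeroExtension [DecidableEq α] [DecidableEq β] (G : Multigraph α β) (m : β → PM)
    (G' : Multigraph α β) (m' : β → PM) : Prop :=
  ∃ v₀ v₁ v₂ f₁ f₂, v₀ ∉ G.verts ∧ v₁ ∈ G.verts ∧ v₂ ∈ G.verts ∧
    f₁ ∉ G.edges ∧ f₂ ∉ G.edges ∧ f₁ ≠ f₂ ∧
    G'.verts = insert v₀ G.verts ∧ G'.edges = insert f₁ (insert f₂ G.edges) ∧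
    (∀ e ∈ G.edges, G'.fst e = G.fst e ∧ G'.snd e = G.snd e ∧ m' e = m e) ∧
    Joins G' f₁ v₀ v₁ ∧ Joins G' f₂ v₀ v₂ ∧
    IsGainGraph G' m'

/-- `(G',m')` is obtained from `(G,m)` by a gained 1-extension. -/
def IsOneExtension [DecidableEq α] [DecidableEq β] (G : Multigraph α β) (m : β → PM)
    (G' : Multigraph α β) (m' : β → PM) : Prop :=
  ∃ v₀ v₃ e f₁ f₂ f₃, v₀ ∉ G.verts ∧ v₃ ∈ G.verts ∧ e ∈ G.edges ∧
    f₁ ∉ G.edges.erase e ∧ f₂ ∉ G.edges.erase e ∧ f₃ ∉ G.edges.erase e ∧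
    f₁ ≠ f₂ ∧ f₁ ≠ f₃ ∧ f₂ ≠ f₃ ∧
    G'.verts = insert v₀ G.verts ∧
    G'.edges = insert f₁ (insert f₂ (insert f₃ (G.edges.erase e))) ∧
    (∀ e' ∈ G.edges.erase e, G'.fst e' = G.fst e' ∧ G'.snd e' = G.snd e' ∧ m' e' = m e') ∧
    Joins G' f₁ v₀ (G.fst e) ∧ Joins G' f₂ v₀ (G.snd e) ∧ Joins G' f₃ v₀ v₃ ∧
    (gainFrom G' m' v₀ f₁)⁻¹ * gainFrom G' m' v₀ f₂ = m e ∧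
    IsGainGraph G' m'

/-- `(G',m')` is obtained from `(G,m)` by a gained loop-1-extension. -/
def IsLoopOneExtension [DecidableEq α] [DecidableEq β] (G : Multigraph α β) (m : β → PM)
    (G' : Multigraph α β) (m' : β → PM) : Prop :=
  ∃ v₀ v₁ l f, v₀ ∉ G.verts ∧ v₁ ∈ G.verts ∧ l ∉ G.edges ∧ f ∉ G.edges ∧ l ≠ f ∧
    G'.verts = insert v₀ G.verts ∧ G'.edges = insert l (insert f G.edges) ∧
    (∀ e ∈ G.edges, G'.fst e = G.fst e ∧ G'.snd e = G.snd e ∧ m' e = m e) ∧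
    G'.fst l = v₀ ∧ G'.snd l = v₀ ∧ (m' l).r = true ∧
    Joins G' f v₀ v₁ ∧ IsGainGraph G' m'

/-- A `ℤ²⋊𝒞ₛ`-tight gain graph on `K₁¹`: a single vertex with a single loop whose
gain has non-trivial `𝒞ₛ`-component. -/
def IsTightK11 (G : Multigraph α β) (m : β → PM) : Prop :=
  ∃ v l, G.verts = {v} ∧ G.edges = {l} ∧ G.fst l = v ∧ G.snd l = v ∧ (m l).r = true

/-! ### Auxiliary infrastructure for the proof -/
set_option linter.unusedSectionVars false

section WalkInfra
variable {α β : Type}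

lemma PM.r_mul (a b : PM) : (a * b).r = xor a.r b.r := rfl
lemma PM.r_inv (a : PM) : (a⁻¹).r = a.r := rfl
lemma PM.r_one : (1 : PM).r = false := rfl

lemma isWalk_append {H : Multigraph α β} {u v w : α} {L L' : List (β × Bool)}
    (h : IsWalk H u v L) (h' : IsWalk H v w L') : IsWalk H u w (L ++ L') := by
  induction L generalizing u with
  | nil => have h0 : u = v := h; subst h0; exact h'
  | cons s L ih => exact ⟨h.1, h.2.1, ih h.2.2⟩

lemma walkGain_append (m : β → PM) (L L' : List (β × Bool)) :
    walkGain m (L ++ L') = walkGain m L * walkGain m L' := by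
  simp [walkGain]

/-- The reverse of a walk. -/
def revW (L : List (β × Bool)) : List (β × Bool) := (L.map (fun s => (s.1, !s.2))).reverse

lemma revW_cons (s : β × Bool) (L : List (β × Bool)) :
    revW (s :: L) = revW L ++ [(s.1, !s.2)] := by simp [revW]

lemma isWalk_single {H : Multigraph α β} {e : β} (he : e ∈ H.edges) :
    IsWalk H (H.fst e) (H.snd e) [(e, true)] := ⟨he, rfl, rfl⟩

lemma isWalk_single' {H : Multigraph α β} {e : β} (he : e ∈ H.edges) :
    IsWalk H (H.snd e) (H.fst e) [(e, false)] := ⟨he, rfl, rfl⟩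

lemma isWalk_rev {H : Multigraph α β} {u v : α} {L} (h : IsWalk H u v L) :
    IsWalk H v u (revW L) := by
  induction L generalizing u with
  | nil => have h0 : u = v := h; subst h0; rfl
  | cons s L ih =>
      obtain ⟨he, hh, ht⟩ := h
      have h1 : IsWalk H v (stepTail H s) (revW L) := ih ht
      have h2 : IsWalk H (stepTail H s) u [(s.1, !s.2)] := by
        obtain ⟨e, d⟩ := s
        cases d
        · exact ⟨he, rfl, hh⟩
        · exact ⟨he, rfl, hh⟩
      rw [revW_cons]
      exact isWalk_append h1 h2

lemma walkGain_single (m : β → PM) (e : β) (d : Bool) :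
    walkGain m [(e, d)] = if d then m e else (m e)⁻¹ := by simp [walkGain]

lemma walkGain_rev (m : β → PM) (L : List (β × Bool)) :
    walkGain m (revW L) = (walkGain m L)⁻¹ := by
  induction L with
  | nil => simp [walkGain, revW]
  | cons s L ih =>
      rw [revW_cons, walkGain_append, ih, walkGain_single]
      have h1 : walkGain m (s :: L) = (if s.2 then m s.1 else (m s.1)⁻¹) * walkGain m L := by
        simp [walkGain]
      rw [h1, mul_inv_rev]
      congr 1
      cases h : s.2 <;> simp

lemma isWalk_edges {H : Multigraph α β} {u v : α} {L} (h : IsWalk H u v L) :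
    ∀ s ∈ L, s.1 ∈ H.edges := by
  induction L generalizing u with
  | nil => intro s hs; cases hs
  | cons t L ih =>
      intro s hs
      rcases List.mem_cons.1 hs with h' | h'
      · subst h'; exact h.1
      · exact ih h.2.2 s h'

lemma isWalk_end_mem {H : Multigraph α β} {u v : α} {L} (h : IsWalk H u v L)
    (hu : u ∈ H.verts) : v ∈ H.verts := by
  induction L generalizing u with
  | nil => have h0 : u = v := h; subst h0; exact hu
  | cons s L ih =>
      obtain ⟨he, hh, ht⟩ := h
      refine ih ht ?_
      obtain ⟨e, d⟩ := s
      cases d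
      · exact H.fst_mem e he
      · exact H.snd_mem e he

lemma isWalk_mono {H K : Multigraph α β} (hE : H.edges ⊆ K.edges)
    (hfst : ∀ e ∈ H.edges, H.fst e = K.fst e) (hsnd : ∀ e ∈ H.edges, H.snd e = K.snd e)
    {u v : α} {L} (h : IsWalk H u v L) : IsWalk K u v L := by
  induction L generalizing u with
  | nil => exact h
  | cons s L ih =>
      obtain ⟨he, hh, ht⟩ := h
      obtain ⟨e, d⟩ := s
      refine ⟨hE he, ?_, ?_⟩
      · cases d
        · show K.snd e = u
          rw [← hsnd e he]; exact hh
        · show K.fst e = u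
          rw [← hfst e he]; exact hh
      · cases d
        · show IsWalk K (K.fst e) v L
          rw [← hfst e he]; exact ih ht
        · show IsWalk K (K.snd e) v L
          rw [← hsnd e he]; exact ih ht

lemma walkGain_congr {m m' : β → PM} {L : List (β × Bool)}
    (h : ∀ s ∈ L, m s.1 = m' s.1) : walkGain m L = walkGain m' L := by
  induction L with
  | nil => rfl
  | cons s L ih =>
      have h1 := h s List.mem_cons_self
      have h2 := ih (fun t ht => h t (List.mem_cons_of_mem _ ht))
      show (if s.2 then m s.1 else (m s.1)⁻¹) * walkGain m L
          = (if s.2 then m' s.1 else (m' s.1)⁻¹) * walkGain m' L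
      rw [h1, h2]

lemma pp_gain_eq {H : Multigraph α β} {m : β → PM} (hpp : PurelyPeriodic H m)
    {u v : α} {L L'} (h : IsWalk H u v L) (h' : IsWalk H u v L') :
    (walkGain m L).r = (walkGain m L').r := by
  have h0 := hpp u (L ++ revW L') (isWalk_append h (isWalk_rev h'))
  rw [walkGain_append, walkGain_rev] at h0
  have h2 : xor (walkGain m L).r (walkGain m L').r = false := by
    rw [← PM.r_inv (walkGain m L'), ← PM.r_mul]; exact h0
  cases hA : (walkGain m L).r <;> cases hB : (walkGain m L').r <;> simp_all

lemma bal_gain_eq {H : Multigraph α β} {m : β → PM} (hb : Balanced H m)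
    {u v : α} {L L'} (h : IsWalk H u v L) (h' : IsWalk H u v L') :
    walkGain m L = walkGain m L' := by
  have h0 := hb u (L ++ revW L') (isWalk_append h (isWalk_rev h'))
  rw [walkGain_append, walkGain_rev] at h0
  exact mul_inv_eq_one.mp h0

lemma pot_bool {H : Multigraph α β} {m : β → PM} (ρ : α → Bool)
    (h : ∀ e ∈ H.edges, (m e).r = xor (ρ (H.fst e)) (ρ (H.snd e))) :
    ∀ {u v : α} {L}, IsWalk H u v L → (walkGain m L).r = xor (ρ u) (ρ v) := by
  intro u v L
  induction L generalizing u with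
  | nil =>
      intro h'
      have h0 : u = v := h'
      subst h0; simp [walkGain, PM.r_one]
  | cons s L ih =>
      rintro ⟨he, hh, ht⟩
      have hrec := ih ht
      have hgain : walkGain m (s :: L)
          = (if s.2 then m s.1 else (m s.1)⁻¹) * walkGain m L := by simp [walkGain]
      rw [hgain, PM.r_mul, hrec]
      obtain ⟨e, d⟩ := s
      have hme := h e he
      cases d
      · have hu : H.snd e = u := hh
        have htl : stepTail H (e, false) = H.fst e := rfl
        rw [htl, if_neg (by simp), PM.r_inv, hme, ← hu]
        cases ρ (H.fst e) <;> cases ρ (H.snd e) <;> cases ρ v <;> simp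
      · have hu : H.fst e = u := hh
        have htl : stepTail H (e, true) = H.snd e := rfl
        rw [htl, if_pos rfl, hme, ← hu]
        cases ρ (H.fst e) <;> cases ρ (H.snd e) <;> cases ρ v <;> simp

lemma pp_of_pot {H : Multigraph α β} {m : β → PM} (ρ : α → Bool)
    (h : ∀ e ∈ H.edges, (m e).r = xor (ρ (H.fst e)) (ρ (H.snd e))) :
    PurelyPeriodic H m := fun u L hw => by
  rw [pot_bool ρ h hw]; exact Bool.xor_self _

lemma pot_pm {H : Multigraph α β} {m : β → PM} (φ : α → PM)
    (h : ∀ e ∈ H.edges, m e = (φ (H.fst e))⁻¹ * φ (H.snd e)) :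
    ∀ {u v : α} {L}, IsWalk H u v L → walkGain m L = (φ u)⁻¹ * φ v := by
  intro u v L
  induction L generalizing u with
  | nil =>
      intro h'
      have h0 : u = v := h'
      subst h0; simp [walkGain]
  | cons s L ih =>
      rintro ⟨he, hh, ht⟩
      have hrec := ih ht
      have hgain : walkGain m (s :: L)
          = (if s.2 then m s.1 else (m s.1)⁻¹) * walkGain m L := by simp [walkGain]
      rw [hgain, hrec]
      obtain ⟨e, d⟩ := s
      have hme := h e he
      cases d
      · have hu : H.snd e = u := hh
        have htl : stepTail H (e, false) = H.fst e := rfl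
        rw [htl, if_neg (by simp), hme, ← hu]
        group
      · have hu : H.fst e = u := hh
        have htl : stepTail H (e, true) = H.snd e := rfl
        rw [htl, if_pos rfl, hme, ← hu]
        group

lemma bal_of_pot {H : Multigraph α β} {m : β → PM} (φ : α → PM)
    (h : ∀ e ∈ H.edges, m e = (φ (H.fst e))⁻¹ * φ (H.snd e)) :
    Balanced H m := fun u L hw => by
  rw [pot_pm φ h hw]; group

lemma isSubgraph_refl (H : Multigraph α β) : IsSubgraph H H :=
  ⟨Finset.Subset.refl _, Finset.Subset.refl _, fun _ _ => ⟨rfl, rfl⟩⟩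

lemma isSubgraph_trans {H K L : Multigraph α β} (h1 : IsSubgraph H K) (h2 : IsSubgraph K L) :
    IsSubgraph H L := by
  refine ⟨h1.1.trans h2.1, h1.2.1.trans h2.2.1, fun e he => ?_⟩
  obtain ⟨a1, a2⟩ := h1.2.2 e he
  obtain ⟨b1, b2⟩ := h2.2.2 e (h1.2.1 he)
  exact ⟨a1.trans b1, a2.trans b2⟩

lemma isWalk_of_isSubgraph {H K : Multigraph α β} (h : IsSubgraph H K)
    {u v : α} {L} (hw : IsWalk H u v L) : IsWalk K u v L :=
  isWalk_mono h.2.1 (fun e he => (h.2.2 e he).1) (fun e he => (h.2.2 e he).2) hw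

lemma pp_of_isSubgraph {H K : Multigraph α β} {m : β → PM} (h : IsSubgraph H K)
    (hpp : PurelyPeriodic K m) : PurelyPeriodic H m :=
  fun u L hw => hpp u L (isWalk_of_isSubgraph h hw)

lemma bal_of_isSubgraph {H K : Multigraph α β} {m : β → PM} (h : IsSubgraph H K)
    (hb : Balanced K m) : Balanced H m :=
  fun u L hw => hb u L (isWalk_of_isSubgraph h hw)

end WalkInfra

section GSInfra
variable {α β : Type} [DecidableEq α] [DecidableEq β]

/-- A canonical subgraph of `G`, with endpoint maps those of `G`. -/
structure GS (G : Multigraph α β) : Type where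
  V : Finset α
  E : Finset β
  hV : V ⊆ G.verts
  hE : E ⊆ G.edges
  hf : ∀ e ∈ E, G.fst e ∈ V
  hs : ∀ e ∈ E, G.snd e ∈ V

variable {G : Multigraph α β}

def GS.toM (X : GS G) : Multigraph α β := ⟨X.V, X.E, G.fst, G.snd, X.hf, X.hs⟩

@[simp] lemma GS.toM_verts (X : GS G) : X.toM.verts = X.V := rfl
@[simp] lemma GS.toM_edges (X : GS G) : X.toM.edges = X.E := rfl
@[simp] lemma GS.toM_fst (X : GS G) : X.toM.fst = G.fst := rfl
@[simp] lemma GS.toM_snd (X : GS G) : X.toM.snd = G.snd := rfl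

lemma GS.isSub (X : GS G) : IsSubgraph X.toM G :=
  ⟨X.hV, X.hE, fun _ _ => ⟨rfl, rfl⟩⟩

def GS.union (X Y : GS G) : GS G where
  V := X.V ∪ Y.V
  E := X.E ∪ Y.E
  hV := Finset.union_subset X.hV Y.hV
  hE := Finset.union_subset X.hE Y.hE
  hf := fun e he => by
    rcases Finset.mem_union.1 he with h | h
    · exact Finset.mem_union_left _ (X.hf e h)
    · exact Finset.mem_union_right _ (Y.hf e h)
  hs := fun e he => by
    rcases Finset.mem_union.1 he with h | h
    · exact Finset.mem_union_left _ (X.hs e h)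
    · exact Finset.mem_union_right _ (Y.hs e h)

def GS.inter (X Y : GS G) : GS G where
  V := X.V ∩ Y.V
  E := X.E ∩ Y.E
  hV := Finset.inter_subset_left.trans X.hV
  hE := Finset.inter_subset_left.trans X.hE
  hf := fun e he => by
    rcases Finset.mem_inter.1 he with ⟨h1, h2⟩
    exact Finset.mem_inter.2 ⟨X.hf e h1, Y.hf e h2⟩
  hs := fun e he => by
    rcases Finset.mem_inter.1 he with ⟨h1, h2⟩
    exact Finset.mem_inter.2 ⟨X.hs e h1, Y.hs e h2⟩

@[simp] lemma GS.union_V (X Y : GS G) : (X.union Y).V = X.V ∪ Y.V := rfl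
@[simp] lemma GS.union_E (X Y : GS G) : (X.union Y).E = X.E ∪ Y.E := rfl
@[simp] lemma GS.inter_V (X Y : GS G) : (X.inter Y).V = X.V ∩ Y.V := rfl
@[simp] lemma GS.inter_E (X Y : GS G) : (X.inter Y).E = X.E ∩ Y.E := rfl

lemma GS.walk_mono {X Y : GS G} (h : X.E ⊆ Y.E) {u v : α} {L}
    (hw : IsWalk X.toM u v L) : IsWalk Y.toM u v L :=
  isWalk_mono (H := X.toM) (K := Y.toM) h (fun _ _ => rfl) (fun _ _ => rfl) hw

lemma GS.pp_mono {X Y : GS G} {m : β → PM} (h : X.E ⊆ Y.E)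
    (hpp : PurelyPeriodic Y.toM m) : PurelyPeriodic X.toM m :=
  fun u L hw => hpp u L (GS.walk_mono h hw)

lemma GS.bal_mono {X Y : GS G} {m : β → PM} (h : X.E ⊆ Y.E)
    (hb : Balanced Y.toM m) : Balanced X.toM m :=
  fun u L hw => hb u L (GS.walk_mono h hw)

/-- Reachability inside a canonical subgraph. -/
def Reach (X : GS G) (u v : α) : Prop := ∃ L, IsWalk X.toM u v L

lemma Reach.refl (X : GS G) (u : α) : Reach X u u := ⟨[], rfl⟩

lemma reach_snd {X : GS G} {u : α} {e : β} (he : e ∈ X.E) (h : Reach X u (G.fst e)) :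
    Reach X u (G.snd e) := by
  obtain ⟨L, hw⟩ := h
  exact ⟨L ++ [(e, true)], isWalk_append hw (isWalk_single (H := X.toM) he)⟩

lemma reach_fst {X : GS G} {u : α} {e : β} (he : e ∈ X.E) (h : Reach X u (G.snd e)) :
    Reach X u (G.fst e) := by
  obtain ⟨L, hw⟩ := h
  exact ⟨L ++ [(e, false)], isWalk_append hw (isWalk_single' (H := X.toM) he)⟩

lemma reach_mem {X : GS G} {u v : α} (h : Reach X u v) (hu : u ∈ X.V) : v ∈ X.V := by
  obtain ⟨L, hw⟩ := h
  exact isWalk_end_mem hw hu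

/-- Splitting a disconnected subgraph along reachability. -/
lemma gs_split (X : GS G) (u w : α) (hu : u ∈ X.V) (hw : w ∈ X.V)
    (huw : u ≠ w) (hur : ¬ Reach X u w) (ℓ : ℤ) (hl1 : 1 ≤ ℓ) (hl3 : ℓ ≤ 3)
    (hsub : ∀ Y : GS G, Y.V ⊆ X.V → Y.E ⊆ X.E → 1 ≤ Y.E.card →
      (Y.E.card : ℤ) ≤ 2 * Y.V.card - ℓ) :
    (X.E = ∅ ∧ X.V.card = 2) ∨ (X.E.card : ℤ) ≤ 2 * X.V.card - 2 * ℓ ∨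
      (X.E.card : ℤ) ≤ 2 * X.V.card - ℓ - 2 := by
  classical
  set p : α → Prop := fun x => Reach X u x with hp
  have hcl1 : ∀ e ∈ X.E, p (G.fst e) → p (G.snd e) := fun e he h => reach_snd he h
  have hcl2 : ∀ e ∈ X.E, p (G.snd e) → p (G.fst e) := fun e he h => reach_fst he h
  let C : GS G :=
    ⟨X.V.filter p, X.E.filter (fun e => p (G.fst e)),
      (Finset.filter_subset _ _).trans X.hV, (Finset.filter_subset _ _).trans X.hE,
      fun e he => by
        rcases Finset.mem_filter.1 he with ⟨heE, hpe⟩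
        exact Finset.mem_filter.2 ⟨X.hf e heE, hpe⟩,
      fun e he => by
        rcases Finset.mem_filter.1 he with ⟨heE, hpe⟩
        exact Finset.mem_filter.2 ⟨X.hs e heE, hcl1 e heE hpe⟩⟩
  let R : GS G :=
    ⟨X.V.filter (fun x => ¬ p x), X.E.filter (fun e => ¬ p (G.fst e)),
      (Finset.filter_subset _ _).trans X.hV, (Finset.filter_subset _ _).trans X.hE,
      fun e he => by
        rcases Finset.mem_filter.1 he with ⟨heE, hpe⟩
        exact Finset.mem_filter.2 ⟨X.hf e heE, hpe⟩,
      fun e he => by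
        rcases Finset.mem_filter.1 he with ⟨heE, hpe⟩
        exact Finset.mem_filter.2 ⟨X.hs e heE, fun hc => hpe (hcl2 e heE hc)⟩⟩
  have hVc : C.V.card + R.V.card = X.V.card :=
    Finset.card_filter_add_card_filter_not (p := p)
  have hEc : C.E.card + R.E.card = X.E.card :=
    Finset.card_filter_add_card_filter_not (p := fun e => p (G.fst e))
  have huC : u ∈ C.V := Finset.mem_filter.2 ⟨hu, Reach.refl X u⟩
  have hwR : w ∈ R.V := Finset.mem_filter.2 ⟨hw, hur⟩
  have hvC : 1 ≤ C.V.card := Finset.card_pos.2 ⟨u, huC⟩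
  have hvR : 1 ≤ R.V.card := Finset.card_pos.2 ⟨w, hwR⟩
  have hCb : 1 ≤ C.E.card → (C.E.card : ℤ) ≤ 2 * C.V.card - ℓ :=
    fun h => hsub C (Finset.filter_subset _ _) (Finset.filter_subset _ _) h
  have hRb : 1 ≤ R.E.card → (R.E.card : ℤ) ≤ 2 * R.V.card - ℓ :=
    fun h => hsub R (Finset.filter_subset _ _) (Finset.filter_subset _ _) h
  rcases Nat.eq_zero_or_pos C.E.card with hc0 | hc1 <;>
    rcases Nat.eq_zero_or_pos R.E.card with hr0 | hr1
  · -- no edges at all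
    have hE0 : X.E.card = 0 := by omega
    by_cases hv2 : X.V.card = 2
    · exact Or.inl ⟨Finset.card_eq_zero.1 hE0, hv2⟩
    · have hcard2 : 2 ≤ X.V.card := by
        have hsub2 : ({u, w} : Finset α) ⊆ X.V := by
          intro x hx
          rcases Finset.mem_insert.1 hx with rfl | hx
          · exact hu
          · rw [Finset.mem_singleton.1 hx]; exact hw
        have hc := Finset.card_le_card hsub2
        rw [Finset.card_pair huw] at hc
        exact hc
      right; left; omega
  · have h1 := hRb hr1
    right; right; omega
  · have h1 := hCb hc1
    right; right; omega
  · have h1 := hCb hc1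
    have h2 := hRb hr1
    right; left; omega

/-- Connectivity from a tight edge count. -/
lemma gs_conn (X : GS G) (ℓ : ℤ) (hl1 : 1 ≤ ℓ) (hl3 : ℓ ≤ 3)
    (hsub : ∀ Y : GS G, Y.V ⊆ X.V → Y.E ⊆ X.E → 1 ≤ Y.E.card →
      (Y.E.card : ℤ) ≤ 2 * Y.V.card - ℓ)
    (hcount : 2 * (X.V.card : ℤ) - ℓ ≤ X.E.card) :
    ∀ u ∈ X.V, ∀ w ∈ X.V, Reach X u w := by
  intro u hu w hw
  by_cases huw : u = w
  · subst huw; exact Reach.refl X u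
  by_contra hur
  rcases gs_split X u w hu hw huw hur ℓ hl1 hl3 hsub with ⟨hE, hV⟩ | h | h
  · rw [hE] at hcount
    simp only [Finset.card_empty, Nat.cast_zero, hV] at hcount
    omega
  · omega
  · omega

end GSInfra

section MainInfra
variable {α β : Type} [DecidableEq α] [DecidableEq β]

/-- The standing hypotheses of the theorem, in normalised form. -/
structure Setup (G : Multigraph α β) (m : β → PM) (v₀ v₁ v₂ : α) (e₁ e₂ e₃ : β) : Prop where
  hT : PMTight G m
  h01 : v₁ ≠ v₀
  h02 : v₂ ≠ v₀
  h12 : v₁ ≠ v₂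
  hv₀ : v₀ ∈ G.verts
  he12 : e₁ ≠ e₂
  he13 : e₁ ≠ e₃
  he23 : e₂ ≠ e₃
  hm₁ : e₁ ∈ G.edges
  hm₂ : e₂ ∈ G.edges
  hm₃ : e₃ ∈ G.edges
  hor₁ : (G.fst e₁ = v₀ ∧ G.snd e₁ = v₁) ∨ (G.fst e₁ = v₁ ∧ G.snd e₁ = v₀)
  hor₂ : (G.fst e₂ = v₀ ∧ G.snd e₂ = v₂) ∨ (G.fst e₂ = v₂ ∧ G.snd e₂ = v₀)
  hor₃ : (G.fst e₃ = v₀ ∧ G.snd e₃ = v₂) ∨ (G.fst e₃ = v₂ ∧ G.snd e₃ = v₀)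
  hinc : ∀ e ∈ G.edges, (G.fst e = v₀ ∨ G.snd e = v₀) → e = e₁ ∨ e = e₂ ∨ e = e₃

variable {G : Multigraph α β} {m : β → PM} {v₀ v₁ v₂ : α} {e₁ e₂ e₃ : β}

lemma Setup.hv₁ (S : Setup G m v₀ v₁ v₂ e₁ e₂ e₃) : v₁ ∈ G.verts := by
  rcases S.hor₁ with ⟨h1, h2⟩ | ⟨h1, h2⟩
  · exact h2 ▸ G.snd_mem e₁ S.hm₁
  · exact h1 ▸ G.fst_mem e₁ S.hm₁

lemma Setup.hv₂ (S : Setup G m v₀ v₁ v₂ e₁ e₂ e₃) : v₂ ∈ G.verts := by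
  rcases S.hor₂ with ⟨h1, h2⟩ | ⟨h1, h2⟩
  · exact h2 ▸ G.snd_mem e₂ S.hm₂
  · exact h1 ▸ G.fst_mem e₂ S.hm₂

lemma Setup.bnd1 (S : Setup G m v₀ v₁ v₂ e₁ e₂ e₃) (X : GS G) (h1 : 1 ≤ X.E.card) :
    (X.E.card : ℤ) ≤ 2 * X.V.card - 1 := by
  have h := S.hT.1.1 X.toM X.isSub h1
  exact_mod_cast h

lemma Setup.bnd2 (S : Setup G m v₀ v₁ v₂ e₁ e₂ e₃) (X : GS G)
    (hpp : PurelyPeriodic X.toM m) (h1 : 1 ≤ X.E.card) :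
    (X.E.card : ℤ) ≤ 2 * X.V.card - 2 := by
  have h := S.hT.2.1 X.toM X.isSub hpp X.toM (isSubgraph_refl _) h1
  exact_mod_cast h

lemma Setup.bnd3 (S : Setup G m v₀ v₁ v₂ e₁ e₂ e₃) (X : GS G)
    (hb : Balanced X.toM m) (h1 : 1 ≤ X.E.card) :
    (X.E.card : ℤ) ≤ 2 * X.V.card - 3 := by
  have h := S.hT.2.2 X.toM X.isSub hb X.toM (isSubgraph_refl _) h1
  exact_mod_cast h

lemma Setup.e_not_mem (S : Setup G m v₀ v₁ v₂ e₁ e₂ e₃) (D : GS G) (hD : v₀ ∉ D.V) :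
    e₁ ∉ D.E ∧ e₂ ∉ D.E ∧ e₃ ∉ D.E := by
  refine ⟨fun h => ?_, fun h => ?_, fun h => ?_⟩
  · rcases S.hor₁ with ⟨h1, h2⟩ | ⟨h1, h2⟩
    · exact hD (h1 ▸ D.hf e₁ h)
    · exact hD (h2 ▸ D.hs e₁ h)
  · rcases S.hor₂ with ⟨h1, h2⟩ | ⟨h1, h2⟩
    · exact hD (h1 ▸ D.hf e₂ h)
    · exact hD (h2 ▸ D.hs e₂ h)
  · rcases S.hor₃ with ⟨h1, h2⟩ | ⟨h1, h2⟩
    · exact hD (h1 ▸ D.hf e₃ h)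
    · exact hD (h2 ▸ D.hs e₃ h)

/-- Adding `v₀` and the edges `e₁,e₂,e₃` to a subgraph containing `v₁,v₂`. -/
def Setup.plus (S : Setup G m v₀ v₁ v₂ e₁ e₂ e₃) (D : GS G)
    (h1 : v₁ ∈ D.V) (h2 : v₂ ∈ D.V) : GS G where
  V := insert v₀ D.V
  E := insert e₁ (insert e₂ (insert e₃ D.E))
  hV := Finset.insert_subset S.hv₀ D.hV
  hE := by
    intro e he
    rcases Finset.mem_insert.1 he with rfl | he
    · exact S.hm₁
    rcases Finset.mem_insert.1 he with rfl | he
    · exact S.hm₂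
    rcases Finset.mem_insert.1 he with rfl | he
    · exact S.hm₃
    exact D.hE he
  hf := by
    intro e he
    rcases Finset.mem_insert.1 he with rfl | he
    · rcases S.hor₁ with ⟨ha, hb⟩ | ⟨ha, hb⟩
      · rw [ha]; exact Finset.mem_insert_self _ _
      · rw [ha]; exact Finset.mem_insert_of_mem h1
    rcases Finset.mem_insert.1 he with rfl | he
    · rcases S.hor₂ with ⟨ha, hb⟩ | ⟨ha, hb⟩
      · rw [ha]; exact Finset.mem_insert_self _ _
      · rw [ha]; exact Finset.mem_insert_of_mem h2
    rcases Finset.mem_insert.1 he with rfl | he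
    · rcases S.hor₃ with ⟨ha, hb⟩ | ⟨ha, hb⟩
      · rw [ha]; exact Finset.mem_insert_self _ _
      · rw [ha]; exact Finset.mem_insert_of_mem h2
    exact Finset.mem_insert_of_mem (D.hf e he)
  hs := by
    intro e he
    rcases Finset.mem_insert.1 he with rfl | he
    · rcases S.hor₁ with ⟨ha, hb⟩ | ⟨ha, hb⟩
      · rw [hb]; exact Finset.mem_insert_of_mem h1
      · rw [hb]; exact Finset.mem_insert_self _ _
    rcases Finset.mem_insert.1 he with rfl | he
    · rcases S.hor₂ with ⟨ha, hb⟩ | ⟨ha, hb⟩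
      · rw [hb]; exact Finset.mem_insert_of_mem h2
      · rw [hb]; exact Finset.mem_insert_self _ _
    rcases Finset.mem_insert.1 he with rfl | he
    · rcases S.hor₃ with ⟨ha, hb⟩ | ⟨ha, hb⟩
      · rw [hb]; exact Finset.mem_insert_of_mem h2
      · rw [hb]; exact Finset.mem_insert_self _ _
    exact Finset.mem_insert_of_mem (D.hs e he)

lemma Setup.plus_cards (S : Setup G m v₀ v₁ v₂ e₁ e₂ e₃) (D : GS G)
    (h1 : v₁ ∈ D.V) (h2 : v₂ ∈ D.V) (hD : v₀ ∉ D.V) :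
    (S.plus D h1 h2).V.card = D.V.card + 1 ∧ (S.plus D h1 h2).E.card = D.E.card + 3 := by
  obtain ⟨n1, n2, n3⟩ := S.e_not_mem D hD
  constructor
  · show (insert v₀ D.V).card = _
    rw [Finset.card_insert_of_notMem hD]
  · show (insert e₁ (insert e₂ (insert e₃ D.E))).card = _
    rw [Finset.card_insert_of_notMem (by simp [Finset.mem_insert, S.he12, S.he13, n1]),
        Finset.card_insert_of_notMem (by simp [Finset.mem_insert, S.he23, n2]),
        Finset.card_insert_of_notMem n3]

/-- Claim 1: no subgraph of `G - v₀` containing both `v₁` and `v₂` can have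
`2|V|-1` or more edges. -/
lemma Setup.claim1 (S : Setup G m v₀ v₁ v₂ e₁ e₂ e₃) (D : GS G) (hD : v₀ ∉ D.V)
    (h1 : v₁ ∈ D.V) (h2 : v₂ ∈ D.V) : (D.E.card : ℤ) ≤ 2 * D.V.card - 2 := by
  obtain ⟨hcV, hcE⟩ := S.plus_cards D h1 h2 hD
  have hb := S.bnd1 (S.plus D h1 h2) (by omega)
  rw [hcV, hcE] at hb
  push_cast at hb
  omega

lemma Setup.hbc (S : Setup G m v₀ v₁ v₂ e₁ e₂ e₃) :
    gainFrom G m v₀ e₂ ≠ gainFrom G m v₀ e₃ := by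
  intro hq
  have hV2 : v₂ ∈ G.verts := S.hv₂
  have hXV : ({v₀, v₂} : Finset α) ⊆ G.verts := by
    intro a ha
    rcases Finset.mem_insert.1 ha with rfl | ha
    · exact S.hv₀
    · rw [Finset.mem_singleton.1 ha]; exact hV2
  have hXE : ({e₂, e₃} : Finset β) ⊆ G.edges := by
    intro e he
    rcases Finset.mem_insert.1 he with rfl | he
    · exact S.hm₂
    · rw [Finset.mem_singleton.1 he]; exact S.hm₃
  have hmem : ∀ e ∈ ({e₂, e₃} : Finset β), G.fst e ∈ ({v₀, v₂} : Finset α)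
      ∧ G.snd e ∈ ({v₀, v₂} : Finset α) := by
    intro e he
    rcases Finset.mem_insert.1 he with rfl | he
    · rcases S.hor₂ with ⟨ha, hb⟩ | ⟨ha, hb⟩ <;> rw [ha, hb] <;> simp
    · rw [Finset.mem_singleton.1 he]
      rcases S.hor₃ with ⟨ha, hb⟩ | ⟨ha, hb⟩ <;> rw [ha, hb] <;> simp
  let X : GS G := ⟨{v₀, v₂}, {e₂, e₃}, hXV, hXE,
    fun e he => (hmem e he).1, fun e he => (hmem e he).2⟩
  have hbal : Balanced X.toM m := by
    refine bal_of_pot (fun a => if a = v₀ then 1 else gainFrom G m v₀ e₂) ?_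
    intro e he
    have hgoal : ∀ ec : β, (G.fst ec = v₀ ∧ G.snd ec = v₂) ∨ (G.fst ec = v₂ ∧ G.snd ec = v₀) →
        gainFrom G m v₀ e₂ = gainFrom G m v₀ ec →
        m ec = (if G.fst ec = v₀ then (1:PM) else gainFrom G m v₀ e₂)⁻¹
          * (if G.snd ec = v₀ then 1 else gainFrom G m v₀ e₂) := by
      intro ec hor hg
      rcases hor with ⟨ha, hb⟩ | ⟨ha, hb⟩
      · rw [if_pos ha, hb, if_neg S.h02, hg]
        rw [gainFrom, if_pos ha]
        group
      · rw [ha, if_neg S.h02, if_pos hb, hg]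
        rw [gainFrom, ha, if_neg S.h02]
        group
    rcases Finset.mem_insert.1 he with rfl | he
    · exact hgoal e S.hor₂ rfl
    · rw [Finset.mem_singleton.1 he]
      exact hgoal e₃ S.hor₃ hq
  have hEcard : X.E.card = 2 := Finset.card_pair S.he23
  have hVcard : X.V.card = 2 := Finset.card_pair (Ne.symm S.h02)
  have := S.bnd3 X hbal (by omega)
  rw [hEcard, hVcard] at this
  omega

lemma Setup.inc_set (S : Setup G m v₀ v₁ v₂ e₁ e₂ e₃) :
    G.edges.filter (fun e => ¬ (G.fst e ≠ v₀ ∧ G.snd e ≠ v₀)) = {e₁, e₂, e₃} := by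
  ext e
  simp only [Finset.mem_filter, Finset.mem_insert, Finset.mem_singleton]
  constructor
  · rintro ⟨he, hco⟩
    rw [not_and_or, not_not, not_not] at hco
    exact S.hinc e he hco
  · rintro (rfl | rfl | rfl)
    · refine ⟨S.hm₁, ?_⟩
      rcases S.hor₁ with ⟨h, _⟩ | ⟨_, h⟩ <;> simp [h]
    · refine ⟨S.hm₂, ?_⟩
      rcases S.hor₂ with ⟨h, _⟩ | ⟨_, h⟩ <;> simp [h]
    · refine ⟨S.hm₃, ?_⟩
      rcases S.hor₃ with ⟨h, _⟩ | ⟨_, h⟩ <;> simp [h]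

lemma Setup.countG' (S : Setup G m v₀ v₁ v₂ e₁ e₂ e₃) {x y : α}
    (hx : x ∈ G.verts) (hxv : x ≠ v₀) (hy : y ∈ G.verts) (hyv : y ≠ v₀) :
    ((G.deleteVertex v₀).addEdge e₁ x y).verts = G.verts.erase v₀ ∧
    ((G.deleteVertex v₀).addEdge e₁ x y).edges
        = insert e₁ (G.edges.filter (fun e => G.fst e ≠ v₀ ∧ G.snd e ≠ v₀)) ∧
    ((((G.deleteVertex v₀).addEdge e₁ x y).edges.card : ℤ)
        = 2 * (((G.deleteVertex v₀).addEdge e₁ x y).verts.card : ℤ) - 1) := by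
  have hverts : ((G.deleteVertex v₀).addEdge e₁ x y).verts = G.verts.erase v₀ := by
    show insert x (insert y (G.verts.erase v₀)) = G.verts.erase v₀
    rw [Finset.insert_eq_self.2 (Finset.mem_erase.2 ⟨hyv, hy⟩),
        Finset.insert_eq_self.2 (Finset.mem_erase.2 ⟨hxv, hx⟩)]
  refine ⟨hverts, rfl, ?_⟩
  have hfc := Finset.card_filter_add_card_filter_not
    (s := G.edges) (p := fun e => G.fst e ≠ v₀ ∧ G.snd e ≠ v₀)
  rw [S.inc_set] at hfc
  have h3 : ({e₁, e₂, e₃} : Finset β).card = 3 := by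
    rw [Finset.card_insert_of_notMem (by simp [Finset.mem_insert, S.he12, S.he13]),
        Finset.card_pair S.he23]
  have he1n : e₁ ∉ G.edges.filter (fun e => G.fst e ≠ v₀ ∧ G.snd e ≠ v₀) := by
    rcases S.hor₁ with ⟨h, _⟩ | ⟨_, h⟩ <;> simp [Finset.mem_filter, h]
  have hcardE : ((G.deleteVertex v₀).addEdge e₁ x y).edges.card
      = (G.edges.filter (fun e => G.fst e ≠ v₀ ∧ G.snd e ≠ v₀)).card + 1 := by
    show (insert e₁ (G.edges.filter (fun e => G.fst e ≠ v₀ ∧ G.snd e ≠ v₀))).card = _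
    rw [Finset.card_insert_of_notMem he1n]
  have hcardV : ((G.deleteVertex v₀).addEdge e₁ x y).verts.card = G.verts.card - 1 := by
    rw [hverts, Finset.card_erase_of_mem S.hv₀]
  have hVpos : 1 ≤ G.verts.card := Finset.card_pos.2 ⟨v₀, S.hv₀⟩
  have hE := S.hT.1.2
  have hE' : (G.edges.card : ℤ) = 2 * G.verts.card - 1 := by exact_mod_cast hE
  rw [hcardE, hcardV]
  push_cast [hVpos]
  omega

/-- Extraction of a blocker from a failed reduction choice. -/
lemma Setup.extract (S : Setup G m v₀ v₁ v₂ e₁ e₂ e₃) {x y : α} {g : PM}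
    (hx : x ∈ G.verts) (hxv : x ≠ v₀) (hy : y ∈ G.verts) (hyv : y ≠ v₀)
    (hnT : ¬ PMTight ((G.deleteVertex v₀).addEdge e₁ x y) (Function.update m e₁ g)) :
    ∃ B : GS G, v₀ ∉ B.V ∧ x ∈ B.V ∧ y ∈ B.V ∧
      (2 * (B.V.card : ℤ) - 1 ≤ B.E.card ∨
       (PurelyPeriodic B.toM m ∧ 2 * (B.V.card : ℤ) - 2 ≤ B.E.card ∧
         ∀ L, IsWalk B.toM x y L → (walkGain m L).r = g.r) ∨
       (Balanced B.toM m ∧ 2 * (B.V.card : ℤ) - 3 ≤ B.E.card ∧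
         ∀ L, IsWalk B.toM x y L → walkGain m L = g)) := by
  classical
  set G' := (G.deleteVertex v₀).addEdge e₁ x y with hG'
  set m' := Function.update m e₁ g with hm'
  obtain ⟨hverts, hedges, hcard⟩ := S.countG' hx hxv hy hyv
  have hstepA : ∃ H' : Multigraph α β, IsSubgraph H' G' ∧ 1 ≤ H'.edges.card ∧
      ((2 * (H'.verts.card : ℤ) - 1 < H'.edges.card) ∨
       (PurelyPeriodic H' m' ∧ 2 * (H'.verts.card : ℤ) - 2 < H'.edges.card) ∨
       (Balanced H' m' ∧ 2 * (H'.verts.card : ℤ) - 3 < H'.edges.card)) := by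
    by_cases hsp : Sparse 2 1 G'
    · by_cases hc2 : ∀ H, IsSubgraph H G' → PurelyPeriodic H m' → Sparse 2 2 H
      · by_cases hc3 : ∀ H, IsSubgraph H G' → Balanced H m' → Sparse 2 3 H
        · exact absurd ⟨⟨hsp, by exact_mod_cast hcard⟩, hc2, hc3⟩ hnT
        · push_neg at hc3
          obtain ⟨H, hsubH, hbalH, hnsp⟩ := hc3
          rw [Sparse] at hnsp; push_neg at hnsp
          obtain ⟨H2, hsub2, hcard2, hviol⟩ := hnsp
          refine ⟨H2, isSubgraph_trans hsub2 hsubH, hcard2,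
            Or.inr (Or.inr ⟨bal_of_isSubgraph hsub2 hbalH, ?_⟩)⟩
          push_cast at hviol
          omega
      · push_neg at hc2
        obtain ⟨H, hsubH, hppH, hnsp⟩ := hc2
        rw [Sparse] at hnsp; push_neg at hnsp
        obtain ⟨H2, hsub2, hcard2, hviol⟩ := hnsp
        refine ⟨H2, isSubgraph_trans hsub2 hsubH, hcard2,
          Or.inr (Or.inl ⟨pp_of_isSubgraph hsub2 hppH, ?_⟩)⟩
        push_cast at hviol
        omega
    · rw [Sparse] at hsp; push_neg at hsp
      obtain ⟨H2, hsub2, hcard2, hviol⟩ := hsp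
      refine ⟨H2, hsub2, hcard2, Or.inl ?_⟩
      push_cast at hviol
      omega
  obtain ⟨H', hsub, hone, hkind⟩ := hstepA
  have hfilter_sub : G.edges.filter (fun e => G.fst e ≠ v₀ ∧ G.snd e ≠ v₀) ⊆ G.edges :=
    Finset.filter_subset _ _
  have hB1 : e₁ ∈ H'.edges := by
    by_contra he1
    have hsubG : IsSubgraph H' G := by
      refine ⟨?_, ?_, ?_⟩
      · intro a ha
        have h2 := hsub.1 ha
        rw [hverts] at h2
        exact Finset.mem_of_mem_erase h2
      · intro e he
        have h2 := hsub.2.1 he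
        rw [hedges] at h2
        rcases Finset.mem_insert.1 h2 with rfl | h2
        · exact absurd he he1
        · exact hfilter_sub h2
      · intro e he
        have hne : e ≠ e₁ := fun h => he1 (h ▸ he)
        obtain ⟨hf, hsnd⟩ := hsub.2.2 e he
        constructor
        · rw [hf]
          show Function.update G.fst e₁ x e = G.fst e
          exact Function.update_of_ne hne _ _
        · rw [hsnd]
          show Function.update G.snd e₁ y e = G.snd e
          exact Function.update_of_ne hne _ _
    have hcongr : ∀ u v L, IsWalk H' u v L → walkGain m' L = walkGain m L := by
      intro u v L hw
      refine walkGain_congr ?_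
      intro s hs
      have hmem : s.1 ∈ H'.edges := isWalk_edges hw s hs
      have hne : s.1 ≠ e₁ := fun h => he1 (h ▸ hmem)
      exact Function.update_of_ne hne g m
    rcases hkind with hv | ⟨hpp, hv⟩ | ⟨hbal, hv⟩
    · have h := S.hT.1.1 H' hsubG hone
      push_cast at h
      omega
    · have hppm : PurelyPeriodic H' m := fun u L hw => by
        rw [← hcongr u u L hw]; exact hpp u L hw
      have h := S.hT.2.1 H' hsubG hppm H' (isSubgraph_refl _) hone
      push_cast at h
      omega
    · have hbalm : Balanced H' m := fun u L hw => by
        rw [← hcongr u u L hw]; exact hbal u L hw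
      have h := S.hT.2.2 H' hsubG hbalm H' (isSubgraph_refl _) hone
      push_cast at h
      omega
  have hfstE : ∀ e ∈ H'.edges.erase e₁, H'.fst e = G.fst e ∧ H'.snd e = G.snd e := by
    intro e he
    obtain ⟨hne, heH⟩ := Finset.mem_erase.1 he
    obtain ⟨hf, hsnd⟩ := hsub.2.2 e heH
    constructor
    · rw [hf]
      show Function.update G.fst e₁ x e = G.fst e
      exact Function.update_of_ne hne _ _
    · rw [hsnd]
      show Function.update G.snd e₁ y e = G.snd e
      exact Function.update_of_ne hne _ _
  have hEsub : H'.edges.erase e₁ ⊆ G.edges := by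
    intro e he
    obtain ⟨hne, heH⟩ := Finset.mem_erase.1 he
    have h2 := hsub.2.1 heH
    rw [hedges] at h2
    rcases Finset.mem_insert.1 h2 with h | h
    · exact absurd h hne
    · exact hfilter_sub h
  have hVsub : H'.verts ⊆ G.verts := fun a ha =>
    Finset.mem_of_mem_erase (hverts ▸ hsub.1 ha)
  let B : GS G :=
    ⟨H'.verts, H'.edges.erase e₁, hVsub, hEsub,
     fun e he => by rw [← (hfstE e he).1]; exact H'.fst_mem e (Finset.mem_of_mem_erase he),
     fun e he => by rw [← (hfstE e he).2]; exact H'.snd_mem e (Finset.mem_of_mem_erase he)⟩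
  have hv0B : v₀ ∉ B.V := by
    show v₀ ∉ H'.verts
    intro h
    have h2 := hsub.1 h
    rw [hverts] at h2
    exact (Finset.mem_erase.1 h2).1 rfl
  have hfstH : H'.fst e₁ = x := by
    rw [(hsub.2.2 e₁ hB1).1]
    show Function.update G.fst e₁ x e₁ = x
    exact Function.update_self _ _ _
  have hsndH : H'.snd e₁ = y := by
    rw [(hsub.2.2 e₁ hB1).2]
    show Function.update G.snd e₁ y e₁ = y
    exact Function.update_self _ _ _
  have hxB : x ∈ B.V := hfstH ▸ H'.fst_mem e₁ hB1
  have hyB : y ∈ B.V := hsndH ▸ H'.snd_mem e₁ hB1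
  have hVB : B.V.card = H'.verts.card := rfl
  have hwalkB : ∀ {u v : α} {L}, IsWalk B.toM u v L → IsWalk H' u v L :=
    fun hw => isWalk_mono (H := B.toM) (K := H') (Finset.erase_subset _ _)
      (fun e he => ((hfstE e he).1).symm) (fun e he => ((hfstE e he).2).symm) hw
  have hgainB : ∀ {L : List (β × Bool)}, (∀ s ∈ L, s.1 ∈ B.E) →
      walkGain m L = walkGain m' L := by
    intro L hL
    refine walkGain_congr ?_
    intro s hs
    have hne : s.1 ≠ e₁ := (Finset.mem_erase.1 (hL s hs)).1
    exact (Function.update_of_ne hne g m).symm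
  have hcardB : B.E.card + 1 = H'.edges.card := Finset.card_erase_add_one hB1
  have hclose : ∀ {L}, IsWalk B.toM x y L → IsWalk H' x x (L ++ [(e₁, false)]) := by
    intro L hw
    refine isWalk_append (hwalkB hw) ?_
    exact ⟨hB1, hsndH, hfstH⟩
  have hgend : walkGain m' [(e₁, false)] = g⁻¹ := by
    rw [walkGain_single, if_neg (by simp)]
    rw [hm', Function.update_self]
  rcases hkind with hv | ⟨hpp, hv⟩ | ⟨hbal, hv⟩
  · exact ⟨B, hv0B, hxB, hyB, Or.inl (by omega)⟩
  · refine ⟨B, hv0B, hxB, hyB, Or.inr (Or.inl ⟨?_, by omega, ?_⟩)⟩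
    · intro u L hw
      rw [hgainB (fun s hs => isWalk_edges hw s hs)]
      exact hpp u L (hwalkB hw)
    · intro L hw
      have hcl := hpp x (L ++ [(e₁, false)]) (hclose hw)
      rw [walkGain_append, hgend,
        ← hgainB (fun s hs => isWalk_edges hw s hs)] at hcl
      rw [PM.r_mul, PM.r_inv] at hcl
      cases hA : (walkGain m L).r <;> cases hB2 : g.r <;> simp_all
  · refine ⟨B, hv0B, hxB, hyB, Or.inr (Or.inr ⟨?_, by omega, ?_⟩)⟩
    · intro u L hw
      rw [hgainB (fun s hs => isWalk_edges hw s hs)]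
      exact hbal u L (hwalkB hw)
    · intro L hw
      have hcl := hbal x (L ++ [(e₁, false)]) (hclose hw)
      rw [walkGain_append, hgend,
        ← hgainB (fun s hs => isWalk_edges hw s hs)] at hcl
      exact mul_inv_eq_one.mp hcl

/-- Merging two purely periodic blockers, then adding back `v₀` with its three
edges, yields a purely periodic subgraph of `G` violating `(2,2)`-sparsity. -/
lemma Setup.mergeK (S : Setup G m v₀ v₁ v₂ e₁ e₂ e₃) (rbc : (m e₂).r = (m e₃).r)
    (B₁ B₂ : GS G) (h0₁ : v₀ ∉ B₁.V) (h0₂ : v₀ ∉ B₂.V)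
    (h1₁ : v₁ ∈ B₁.V) (h2₁ : v₂ ∈ B₁.V) (h1₂ : v₁ ∈ B₂.V) (h2₂ : v₂ ∈ B₂.V)
    (hpp₁ : PurelyPeriodic B₁.toM m) (hpp₂ : PurelyPeriodic B₂.toM m)
    (hcon₁ : ∀ u ∈ B₁.V, Reach B₁ v₁ u) (hcon₂ : ∀ u ∈ B₂.V, Reach B₂ v₁ u)
    (hfa₁ : ∀ L, IsWalk B₁.toM v₁ v₂ L → (walkGain m L).r = xor (m e₁).r (m e₂).r)
    (hδ : ∀ u ∈ B₁.V ∩ B₂.V, ∀ L₁ L₂, IsWalk B₁.toM v₁ u L₁ → IsWalk B₂.toM v₁ u L₂ →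
      (walkGain m L₁).r = (walkGain m L₂).r)
    (hcount : 2 * ((B₁.union B₂).V.card : ℤ) - 2 ≤ ((B₁.union B₂).E.card : ℤ)) :
    False := by
  classical
  set U := B₁.union B₂ with hU
  have h0U : v₀ ∉ U.V := by
    rw [hU]
    simp only [GS.union_V, Finset.mem_union]
    push_neg
    exact ⟨h0₁, h0₂⟩
  have h1U : v₁ ∈ U.V := Finset.mem_union_left _ h1₁
  have h2U : v₂ ∈ U.V := Finset.mem_union_left _ h2₁
  set K := S.plus U h1U h2U with hK
  obtain ⟨hcV, hcE⟩ := S.plus_cards U h1U h2U h0U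
  let ρ : α → Bool := fun a =>
    if a = v₀ then (m e₁).r
    else if h : Reach B₁ v₁ a then (walkGain m h.choose).r
    else if h2 : Reach B₂ v₁ a then (walkGain m h2.choose).r
    else false
  have hev₁ : ∀ a, a ≠ v₀ → ∀ L, IsWalk B₁.toM v₁ a L → ρ a = (walkGain m L).r := by
    intro a ha L hw
    have hr : Reach B₁ v₁ a := ⟨L, hw⟩
    show (if a = v₀ then _ else _) = _
    rw [if_neg ha, dif_pos hr]
    exact pp_gain_eq hpp₁ hr.choose_spec hw
  have hev₂ : ∀ a, a ≠ v₀ → a ∈ B₂.V → ∀ L, IsWalk B₂.toM v₁ a L →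
      ρ a = (walkGain m L).r := by
    intro a ha haV L hw
    by_cases hr1 : Reach B₁ v₁ a
    · obtain ⟨L₁, hw₁⟩ := hr1
      rw [hev₁ a ha L₁ hw₁]
      exact hδ a (Finset.mem_inter.2 ⟨reach_mem ⟨L₁, hw₁⟩ h1₁, haV⟩) L₁ L hw₁ hw
    · have hr2 : Reach B₂ v₁ a := ⟨L, hw⟩
      show (if a = v₀ then _ else _) = _
      rw [if_neg ha, dif_neg hr1, dif_pos hr2]
      exact pp_gain_eq hpp₂ hr2.choose_spec hw
  have hρ₀ : ρ v₀ = (m e₁).r := if_pos rfl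
  have hρ₁ : ρ v₁ = false := by
    have h := hev₁ v₁ S.h01 [] rfl
    simpa [walkGain, PM.r_one] using h
  have hρ₂ : ρ v₂ = xor (m e₁).r (m e₂).r := by
    obtain ⟨L, hw⟩ := hcon₁ v₂ h2₁
    rw [hev₁ v₂ S.h02 L hw]
    exact hfa₁ L hw
  have hedge : ∀ (B : GS G), v₀ ∉ B.V →
      (∀ a, a ≠ v₀ → a ∈ B.V → ∀ L, IsWalk B.toM v₁ a L → ρ a = (walkGain m L).r) →
      (∀ u ∈ B.V, Reach B v₁ u) →
      ∀ e ∈ B.E, (m e).r = xor (ρ (G.fst e)) (ρ (G.snd e)) := by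
    intro B h0 hev hcon e he
    have hfV := B.hf e he
    have hsV := B.hs e he
    have hfne : G.fst e ≠ v₀ := fun h => h0 (h ▸ hfV)
    have hsne : G.snd e ≠ v₀ := fun h => h0 (h ▸ hsV)
    obtain ⟨L, hw⟩ := hcon _ hfV
    have hw' : IsWalk B.toM v₁ (G.snd e) (L ++ [(e, true)]) :=
      isWalk_append hw (isWalk_single (H := B.toM) he)
    rw [hev _ hfne hfV L hw, hev _ hsne hsV _ hw', walkGain_append, walkGain_single,
      if_pos rfl, PM.r_mul]
    cases (walkGain m L).r <;> cases (m e).r <;> simp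
  have hpot : ∀ e ∈ K.toM.edges, (m e).r = xor (ρ (G.fst e)) (ρ (G.snd e)) := by
    intro e he
    have he' : e ∈ insert e₁ (insert e₂ (insert e₃ U.E)) := he
    rcases Finset.mem_insert.1 he' with rfl | he' 
    · rcases S.hor₁ with ⟨ha, hb⟩ | ⟨ha, hb⟩ <;> rw [ha, hb, hρ₀, hρ₁] <;>
        cases (m e).r <;> simp
    rcases Finset.mem_insert.1 he' with rfl | he'
    · rcases S.hor₂ with ⟨ha, hb⟩ | ⟨ha, hb⟩ <;> rw [ha, hb, hρ₀, hρ₂] <;>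
        cases (m e₁).r <;> cases (m e).r <;> simp
    rcases Finset.mem_insert.1 he' with rfl | he'
    · rw [← rbc]
      rcases S.hor₃ with ⟨ha, hb⟩ | ⟨ha, hb⟩ <;> rw [ha, hb, hρ₀, hρ₂] <;>
        cases (m e₁).r <;> cases (m e₂).r <;> simp
    rcases Finset.mem_union.1 he' with he2 | he2
    · exact hedge B₁ h0₁ (fun a ha _ L hw => hev₁ a ha L hw) hcon₁ e he2
    · exact hedge B₂ h0₂ hev₂ hcon₂ e he2
  have hppK : PurelyPeriodic K.toM m := pp_of_pot ρ hpot
  have hbnd := S.bnd2 K hppK (by rw [hcE]; omega)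
  rw [hcV, hcE] at hbnd
  push_cast at hbnd
  omega

/-- A purely periodic blocker for the new edge. -/
def BlkP (G : Multigraph α β) (m : β → PM) (x y : α) (g : PM) (B : GS G) : Prop :=
  PurelyPeriodic B.toM m ∧ 2 * (B.V.card : ℤ) - 2 ≤ B.E.card ∧
    ∀ L, IsWalk B.toM x y L → (walkGain m L).r = g.r

/-- A balanced blocker for the new edge. -/
def BlkB (G : Multigraph α β) (m : β → PM) (x y : α) (g : PM) (B : GS G) : Prop :=
  Balanced B.toM m ∧ 2 * (B.V.card : ℤ) - 3 ≤ B.E.card ∧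
    ∀ L, IsWalk B.toM x y L → walkGain m L = g

/-- The case in which the loop choice is blocked by a `(2,1)`-tight subgraph. -/
lemma Setup.caseT (S : Setup G m v₀ v₁ v₂ e₁ e₂ e₃) {g₁ g₂ : PM} (hg12 : g₁ ≠ g₂)
    (T : GS G) (hT0 : v₀ ∉ T.V) (hT2 : v₂ ∈ T.V)
    (hTc : 2 * (T.V.card : ℤ) - 1 ≤ T.E.card)
    (B₁ : GS G) (h₁0 : v₀ ∉ B₁.V) (h₁1 : v₁ ∈ B₁.V) (h₁2 : v₂ ∈ B₁.V)
    (hk₁ : BlkP G m v₁ v₂ g₁ B₁ ∨ BlkB G m v₁ v₂ g₁ B₁)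
    (B₂ : GS G) (h₂0 : v₀ ∉ B₂.V) (h₂1 : v₁ ∈ B₂.V) (h₂2 : v₂ ∈ B₂.V)
    (hk₂ : BlkP G m v₁ v₂ g₂ B₂ ∨ BlkB G m v₁ v₂ g₂ B₂) : False := by
  classical
  -- a purely periodic blocker is impossible in the presence of T
  have elim : ∀ B : GS G, v₀ ∉ B.V → v₁ ∈ B.V → v₂ ∈ B.V →
      PurelyPeriodic B.toM m → 2 * (B.V.card : ℤ) - 2 ≤ B.E.card → False := by
    intro B h0 h1 h2 hpp hc
    have hW0 : v₀ ∉ (B.union T).V := by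
      simp only [GS.union_V, Finset.mem_union]
      push_neg
      exact ⟨h0, hT0⟩
    have hcl := S.claim1 (B.union T) hW0
      (Finset.mem_union_left _ h1) (Finset.mem_union_left _ h2)
    have hVc : (B.union T).V.card + (B.inter T).V.card = B.V.card + T.V.card :=
      Finset.card_union_add_card_inter _ _
    have hEc : (B.union T).E.card + (B.inter T).E.card = B.E.card + T.E.card :=
      Finset.card_union_add_card_inter _ _
    have hJ2 : v₂ ∈ (B.inter T).V := Finset.mem_inter.2 ⟨h2, hT2⟩
    have hJv : 1 ≤ (B.inter T).V.card := Finset.card_pos.2 ⟨v₂, hJ2⟩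
    rcases Nat.eq_zero_or_pos (B.inter T).E.card with h0' | h1'
    · omega
    · have hbJ := S.bnd2 (B.inter T)
        (GS.pp_mono (Finset.inter_subset_left) hpp) h1'
      omega
  have hb₁ : BlkB G m v₁ v₂ g₁ B₁ :=
    hk₁.resolve_left (fun hp => elim B₁ h₁0 h₁1 h₁2 hp.1 hp.2.1)
  have hb₂ : BlkB G m v₁ v₂ g₂ B₂ :=
    hk₂.resolve_left (fun hp => elim B₂ h₂0 h₂1 h₂2 hp.1 hp.2.1)
  -- balanced blockers meet T exactly in v₂
  have hJT : ∀ B : GS G, v₀ ∉ B.V → v₁ ∈ B.V → v₂ ∈ B.V → Balanced B.toM m →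
      2 * (B.V.card : ℤ) - 3 ≤ B.E.card → (B.V ∩ T.V = {v₂} ∧ B.E ∩ T.E = ∅) := by
    intro B h0 h1 h2 hbl hc
    have hW0 : v₀ ∉ (B.union T).V := by
      simp only [GS.union_V, Finset.mem_union]
      push_neg
      exact ⟨h0, hT0⟩
    have hcl := S.claim1 (B.union T) hW0
      (Finset.mem_union_left _ h1) (Finset.mem_union_left _ h2)
    have hVc : (B.union T).V.card + (B.inter T).V.card = B.V.card + T.V.card :=
      Finset.card_union_add_card_inter _ _
    have hEc : (B.union T).E.card + (B.inter T).E.card = B.E.card + T.E.card :=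
      Finset.card_union_add_card_inter _ _
    have hJ2 : v₂ ∈ (B.inter T).V := Finset.mem_inter.2 ⟨h2, hT2⟩
    have hJv : 1 ≤ (B.inter T).V.card := Finset.card_pos.2 ⟨v₂, hJ2⟩
    rcases Nat.eq_zero_or_pos (B.inter T).E.card with h0' | h1'
    · have hV1 : (B.inter T).V.card ≤ 1 := by omega
      constructor
      · refine Finset.eq_singleton_iff_unique_mem.2 ⟨hJ2, fun x hx => ?_⟩
        exact Finset.card_le_one.1 hV1 x hx v₂ hJ2
      · exact Finset.card_eq_zero.1 h0'
    · have hbJ := S.bnd3 (B.inter T)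
        (GS.bal_mono (Finset.inter_subset_left) hbl) h1'
      omega
  obtain ⟨hJ₁V, hJ₁E⟩ := hJT B₁ h₁0 h₁1 h₁2 hb₁.1 hb₁.2.1
  obtain ⟨hJ₂V, hJ₂E⟩ := hJT B₂ h₂0 h₂1 h₂2 hb₂.1 hb₂.2.1
  -- the intersection of the two balanced blockers contains no v₁-v₂ walk
  have hnr : ¬ Reach (B₁.inter B₂) v₁ v₂ := by
    rintro ⟨L, hw⟩
    have hq₁ := hb₁.2.2 L (GS.walk_mono (Finset.inter_subset_left) hw)
    have hq₂ := hb₂.2.2 L (GS.walk_mono (Finset.inter_subset_right) hw)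
    exact hg12 (hq₁ ▸ hq₂ ▸ rfl)
  have hIsplit := gs_split (B₁.inter B₂) v₁ v₂
    (Finset.mem_inter.2 ⟨h₁1, h₂1⟩) (Finset.mem_inter.2 ⟨h₁2, h₂2⟩) S.h12 hnr 3
    (by norm_num) (le_refl 3)
    (fun Y hYV hYE h1' =>
      S.bnd3 Y (GS.bal_mono (hYE.trans (Finset.inter_subset_left)) hb₁.1) h1')
  have hIE : ((B₁.inter B₂).E.card : ℤ) ≤ 2 * (B₁.inter B₂).V.card - 4 := by
    rcases hIsplit with ⟨hE, hV⟩ | h | h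
    · rw [hV]
      rw [GS.inter_E] at hE ⊢
      rw [hE]
      simp
    · omega
    · omega
  -- the union of the blockers is large
  have hVcU : (B₁.union B₂).V.card + (B₁.inter B₂).V.card = B₁.V.card + B₂.V.card :=
    Finset.card_union_add_card_inter _ _
  have hEcU : (B₁.union B₂).E.card + (B₁.inter B₂).E.card = B₁.E.card + B₂.E.card :=
    Finset.card_union_add_card_inter _ _
  have hUE : 2 * ((B₁.union B₂).V.card : ℤ) - 2 ≤ (B₁.union B₂).E.card := by
    have hc₁ := hb₁.2.1
    have hc₂ := hb₂.2.1
    omega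
  -- add T
  have hWV : ((B₁.union B₂).V ∩ T.V) = {v₂} := by
    apply subset_antisymm
    · intro a ha
      obtain ⟨haU, haT⟩ := Finset.mem_inter.1 ha
      rcases Finset.mem_union.1 haU with h | h
      · exact hJ₁V ▸ Finset.mem_inter.2 ⟨h, haT⟩
      · exact hJ₂V ▸ Finset.mem_inter.2 ⟨h, haT⟩
    · intro a ha
      rw [Finset.mem_singleton.1 ha]
      exact Finset.mem_inter.2 ⟨Finset.mem_union_left _ h₁2, hT2⟩
  have hWE : ((B₁.union B₂).E ∩ T.E) = ∅ := by
    apply Finset.eq_empty_of_forall_notMem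
    intro e he
    obtain ⟨heU, heT⟩ := Finset.mem_inter.1 he
    rcases Finset.mem_union.1 heU with h | h
    · exact absurd (hJ₁E ▸ Finset.mem_inter.2 ⟨h, heT⟩) (Finset.notMem_empty e)
    · exact absurd (hJ₂E ▸ Finset.mem_inter.2 ⟨h, heT⟩) (Finset.notMem_empty e)
  have hW0 : v₀ ∉ ((B₁.union B₂).union T).V := by
    simp only [GS.union_V, Finset.mem_union]
    push_neg
    exact ⟨⟨h₁0, h₂0⟩, hT0⟩
  have hcl := S.claim1 ((B₁.union B₂).union T) hW0
    (Finset.mem_union_left _ (Finset.mem_union_left _ h₁1))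
    (Finset.mem_union_left _ (Finset.mem_union_left _ h₁2))
  have hVc2 : ((B₁.union B₂).union T).V.card + ((B₁.union B₂).V ∩ T.V).card
      = (B₁.union B₂).V.card + T.V.card := Finset.card_union_add_card_inter _ _
  have hEc2 : ((B₁.union B₂).union T).E.card + ((B₁.union B₂).E ∩ T.E).card
      = (B₁.union B₂).E.card + T.E.card := Finset.card_union_add_card_inter _ _
  rw [hWV, Finset.card_singleton] at hVc2
  rw [hWE, Finset.card_empty] at hEc2
  omega

lemma gainFrom_r (v : α) (e : β) : (gainFrom G m v e).r = (m e).r := by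
  by_cases h : G.fst e = v <;> simp [gainFrom, h, PM.r_inv]

lemma pp_of_bal {H : Multigraph α β} {mm : β → PM} (hb : Balanced H mm) :
    PurelyPeriodic H mm := fun u L hw => by rw [hb u L hw]; rfl

/-- The case `r(m e₂) = r(m e₃)`: both non-loop choices blocked is impossible. -/
lemma Setup.caseRBC (S : Setup G m v₀ v₁ v₂ e₁ e₂ e₃) (rbc : (m e₂).r = (m e₃).r)
    (B₁ : GS G) (h₁0 : v₀ ∉ B₁.V) (h₁1 : v₁ ∈ B₁.V) (h₁2 : v₂ ∈ B₁.V)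
    (hk₁ : BlkP G m v₁ v₂ ((gainFrom G m v₀ e₁)⁻¹ * gainFrom G m v₀ e₂) B₁ ∨
           BlkB G m v₁ v₂ ((gainFrom G m v₀ e₁)⁻¹ * gainFrom G m v₀ e₂) B₁)
    (B₂ : GS G) (h₂0 : v₀ ∉ B₂.V) (h₂1 : v₁ ∈ B₂.V) (h₂2 : v₂ ∈ B₂.V)
    (hk₂ : BlkP G m v₁ v₂ ((gainFrom G m v₀ e₁)⁻¹ * gainFrom G m v₀ e₃) B₂ ∨
           BlkB G m v₁ v₂ ((gainFrom G m v₀ e₁)⁻¹ * gainFrom G m v₀ e₃) B₂) :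
    False := by
  classical
  have hg1r : ((gainFrom G m v₀ e₁)⁻¹ * gainFrom G m v₀ e₂).r
      = xor (m e₁).r (m e₂).r := by
    rw [PM.r_mul, PM.r_inv, gainFrom_r, gainFrom_r]
  have hg2r : ((gainFrom G m v₀ e₁)⁻¹ * gainFrom G m v₀ e₃).r
      = xor (m e₁).r (m e₂).r := by
    rw [PM.r_mul, PM.r_inv, gainFrom_r, gainFrom_r, ← rbc]
  have hpp₁ : PurelyPeriodic B₁.toM m := by
    rcases hk₁ with h | h
    · exact h.1
    · exact pp_of_bal h.1
  have hpp₂ : PurelyPeriodic B₂.toM m := by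
    rcases hk₂ with h | h
    · exact h.1
    · exact pp_of_bal h.1
  have hfa₁ : ∀ L, IsWalk B₁.toM v₁ v₂ L → (walkGain m L).r = xor (m e₁).r (m e₂).r := by
    rcases hk₁ with h | h
    · exact fun L hw => by rw [h.2.2 L hw, ← hg1r]
    · exact fun L hw => by rw [h.2.2 L hw, ← hg1r]
  have hfa₂ : ∀ L, IsWalk B₂.toM v₁ v₂ L → (walkGain m L).r = xor (m e₁).r (m e₂).r := by
    rcases hk₂ with h | h
    · exact fun L hw => by rw [h.2.2 L hw, ← hg2r]
    · exact fun L hw => by rw [h.2.2 L hw, ← hg2r]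
  have hcon₁ : ∀ u ∈ B₁.V, Reach B₁ v₁ u := by
    rcases hk₁ with h | h
    · exact fun u hu => gs_conn B₁ 2 (by norm_num) (by norm_num)
        (fun Y hYV hYE h1 => S.bnd2 Y (GS.pp_mono hYE h.1) h1) h.2.1 v₁ h₁1 u hu
    · exact fun u hu => gs_conn B₁ 3 (by norm_num) (le_refl 3)
        (fun Y hYV hYE h1 => S.bnd3 Y (GS.bal_mono hYE h.1) h1) h.2.1 v₁ h₁1 u hu
  have hcon₂ : ∀ u ∈ B₂.V, Reach B₂ v₁ u := by
    rcases hk₂ with h | h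
    · exact fun u hu => gs_conn B₂ 2 (by norm_num) (by norm_num)
        (fun Y hYV hYE h1 => S.bnd2 Y (GS.pp_mono hYE h.1) h1) h.2.1 v₁ h₂1 u hu
    · exact fun u hu => gs_conn B₂ 3 (by norm_num) (le_refl 3)
        (fun Y hYV hYE h1 => S.bnd3 Y (GS.bal_mono hYE h.1) h1) h.2.1 v₁ h₂1 u hu
  have hIv₁ : v₁ ∈ (B₁.inter B₂).V := Finset.mem_inter.2 ⟨h₁1, h₂1⟩
  have hIv₂ : v₂ ∈ (B₁.inter B₂).V := Finset.mem_inter.2 ⟨h₁2, h₂2⟩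
  have hIvpos : 2 ≤ (B₁.inter B₂).V.card := by
    have hsub2 : ({v₁, v₂} : Finset α) ⊆ (B₁.inter B₂).V := by
      intro a ha
      rcases Finset.mem_insert.1 ha with rfl | ha
      · exact hIv₁
      · rw [Finset.mem_singleton.1 ha]; exact hIv₂
    have hc := Finset.card_le_card hsub2
    rw [Finset.card_pair S.h12] at hc
    exact hc
  have hU0 : v₀ ∉ (B₁.union B₂).V := by
    simp only [GS.union_V, Finset.mem_union]
    push_neg
    exact ⟨h₁0, h₂0⟩
  have hclU := S.claim1 (B₁.union B₂) hU0
    (Finset.mem_union_left _ h₁1) (Finset.mem_union_left _ h₁2)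
  have hVcU : (B₁.union B₂).V.card + (B₁.inter B₂).V.card = B₁.V.card + B₂.V.card :=
    Finset.card_union_add_card_inter _ _
  have hEcU : (B₁.union B₂).E.card + (B₁.inter B₂).E.card = B₁.E.card + B₂.E.card :=
    Finset.card_union_add_card_inter _ _
  have hδ_of_conn : (∀ u ∈ (B₁.inter B₂).V, Reach (B₁.inter B₂) v₁ u) →
      ∀ u ∈ B₁.V ∩ B₂.V, ∀ L₁ L₂, IsWalk B₁.toM v₁ u L₁ → IsWalk B₂.toM v₁ u L₂ →
      (walkGain m L₁).r = (walkGain m L₂).r := by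
    intro hcon u hu L₁ L₂ hw₁ hw₂
    obtain ⟨L₀, hw₀⟩ := hcon u hu
    have hq1 := pp_gain_eq hpp₁ hw₁ (GS.walk_mono (Finset.inter_subset_left) hw₀)
    have hq2 := pp_gain_eq hpp₂ hw₂ (GS.walk_mono (Finset.inter_subset_right) hw₀)
    rw [hq1, hq2]
  -- establish δ-agreement and the union count, by cases on the blocker kinds
  have hmain : (∀ u ∈ B₁.V ∩ B₂.V, ∀ L₁ L₂, IsWalk B₁.toM v₁ u L₁ →
        IsWalk B₂.toM v₁ u L₂ → (walkGain m L₁).r = (walkGain m L₂).r) ∧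
      2 * ((B₁.union B₂).V.card : ℤ) - 2 ≤ ((B₁.union B₂).E.card : ℤ) := by
    rcases hk₁ with hp₁ | hb₁ <;> rcases hk₂ with hp₂ | hb₂
    · -- (p, p)
      have hc₁ := hp₁.2.1
      have hc₂ := hp₂.2.1
      have hI2 : 2 * ((B₁.inter B₂).V.card : ℤ) - 2 ≤ (B₁.inter B₂).E.card := by omega
      have hIne : 1 ≤ (B₁.inter B₂).E.card := by omega
      have hIb := S.bnd2 (B₁.inter B₂) (GS.pp_mono (Finset.inter_subset_left) hpp₁) hIne
      have hconI := gs_conn (B₁.inter B₂) 2 (by norm_num) (by norm_num)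
        (fun Y hYV hYE h1 =>
          S.bnd2 Y (GS.pp_mono (hYE.trans (Finset.inter_subset_left)) hpp₁) h1) hI2
      exact ⟨hδ_of_conn (fun u hu => hconI v₁ hIv₁ u hu), by omega⟩
    · -- (p, b)
      have hc₁ := hp₁.2.1
      have hc₂ := hb₂.2.1
      have hI3 : 2 * ((B₁.inter B₂).V.card : ℤ) - 3 ≤ (B₁.inter B₂).E.card := by omega
      have hIne : 1 ≤ (B₁.inter B₂).E.card := by omega
      have hIb := S.bnd3 (B₁.inter B₂) (GS.bal_mono (Finset.inter_subset_right) hb₂.1) hIne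
      have hconI := gs_conn (B₁.inter B₂) 3 (by norm_num) (le_refl 3)
        (fun Y hYV hYE h1 =>
          S.bnd3 Y (GS.bal_mono (hYE.trans (Finset.inter_subset_right)) hb₂.1) h1) hI3
      exact ⟨hδ_of_conn (fun u hu => hconI v₁ hIv₁ u hu), by omega⟩
    · -- (b, p)
      have hc₁ := hb₁.2.1
      have hc₂ := hp₂.2.1
      have hI3 : 2 * ((B₁.inter B₂).V.card : ℤ) - 3 ≤ (B₁.inter B₂).E.card := by omega
      have hIne : 1 ≤ (B₁.inter B₂).E.card := by omega
      have hIb := S.bnd3 (B₁.inter B₂) (GS.bal_mono (Finset.inter_subset_left) hb₁.1) hIne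
      have hconI := gs_conn (B₁.inter B₂) 3 (by norm_num) (le_refl 3)
        (fun Y hYV hYE h1 =>
          S.bnd3 Y (GS.bal_mono (hYE.trans (Finset.inter_subset_left)) hb₁.1) h1) hI3
      exact ⟨hδ_of_conn (fun u hu => hconI v₁ hIv₁ u hu), by omega⟩
    · -- (b, b)
      have hc₁ := hb₁.2.1
      have hc₂ := hb₂.2.1
      have hg12 : (gainFrom G m v₀ e₁)⁻¹ * gainFrom G m v₀ e₂
          ≠ (gainFrom G m v₀ e₁)⁻¹ * gainFrom G m v₀ e₃ :=
        fun h => S.hbc (mul_left_cancel h)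
      have hnr : ¬ Reach (B₁.inter B₂) v₁ v₂ := by
        rintro ⟨L, hw⟩
        have hq₁ := hb₁.2.2 L (GS.walk_mono (Finset.inter_subset_left) hw)
        have hq₂ := hb₂.2.2 L (GS.walk_mono (Finset.inter_subset_right) hw)
        exact hg12 (hq₁ ▸ hq₂ ▸ rfl)
      have hI4 : 2 * ((B₁.inter B₂).V.card : ℤ) - 4 ≤ (B₁.inter B₂).E.card := by omega
      rcases gs_split (B₁.inter B₂) v₁ v₂ hIv₁ hIv₂ S.h12 hnr 3 (by norm_num) (le_refl 3)
        (fun Y hYV hYE h1 =>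
          S.bnd3 Y (GS.bal_mono (hYE.trans (Finset.inter_subset_left)) hb₁.1) h1)
        with ⟨hIE, hIV⟩ | h | h
      · have hVeq : ({v₁, v₂} : Finset α) = (B₁.inter B₂).V := by
          refine Finset.eq_of_subset_of_card_le ?_ ?_
          · intro a ha
            rcases Finset.mem_insert.1 ha with rfl | ha
            · exact hIv₁
            · rw [Finset.mem_singleton.1 ha]; exact hIv₂
          · rw [hIV, Finset.card_pair S.h12]
        have hIE0 : (B₁.inter B₂).E.card = 0 := by
          rw [GS.inter_E] at hIE ⊢
          rw [hIE]; rfl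
        constructor
        · intro u hu L₁ L₂ hw₁ hw₂
          have hu' : u ∈ ({v₁, v₂} : Finset α) := hVeq ▸ hu
          rcases Finset.mem_insert.1 hu' with rfl | hu'
          · rw [hpp₁ u L₁ hw₁, hpp₂ u L₂ hw₂]
          · rw [Finset.mem_singleton.1 hu'] at hw₁ hw₂
            rw [hfa₁ L₁ hw₁, hfa₂ L₂ hw₂]
        · omega
      · omega
      · omega
  exact S.mergeK rbc B₁ B₂ h₁0 h₂0 h₁1 h₁2 h₂1 h₂2 hpp₁ hpp₂ hcon₁ hcon₂ hfa₁
    hmain.1 hmain.2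

end MainInfra

/-- A degree-3 vertex with exactly two distinct neighbours admits
a gained 1-reduction preserving `ℤ²⋊𝒞ₛ`-tightness. -/
theorem twoNeighbour_reduction {α β : Type} [DecidableEq α] [DecidableEq β]
    (G : Multigraph α β) (m : β → PM) (hGm : IsGainGraph G m) (hT : PMTight G m)
    (v₀ v₁ v₂ : α) (h01 : v₁ ≠ v₀) (h02 : v₂ ≠ v₀) (h12 : v₁ ≠ v₂)
    (hv₀ : v₀ ∈ G.verts) (hdeg : G.degree v₀ = 3)
    (e₁ e₂ e₃ : β) (he12 : e₁ ≠ e₂) (he13 : e₁ ≠ e₃) (he23 : e₂ ≠ e₃)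
    (hm₁ : e₁ ∈ G.edges) (hm₂ : e₂ ∈ G.edges) (hm₃ : e₃ ∈ G.edges)
    (hi₁ : G.fst e₁ = v₀ ∨ G.snd e₁ = v₀) (ho₁ : otherEnd G v₀ e₁ = v₁)
    (hi₂ : G.fst e₂ = v₀ ∨ G.snd e₂ = v₀) (ho₂ : otherEnd G v₀ e₂ = v₂)
    (hi₃ : G.fst e₃ = v₀ ∨ G.snd e₃ = v₀) (ho₃ : otherEnd G v₀ e₃ = v₂) :
    ∃ i j : Fin 3, i ≠ j ∧
      PMTight ((G.deleteVertex v₀).addEdge e₁ (![v₁, v₂, v₂] i) (![v₁, v₂, v₂] j))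
        (Function.update m e₁
          ((gainFrom G m v₀ (![e₁, e₂, e₃] i))⁻¹ * gainFrom G m v₀ (![e₁, e₂, e₃] j))) := by
  classical
  -- normalise the orientation data
  have hor₁ : (G.fst e₁ = v₀ ∧ G.snd e₁ = v₁) ∨ (G.fst e₁ = v₁ ∧ G.snd e₁ = v₀) := by
    by_cases hf : G.fst e₁ = v₀
    · left
      refine ⟨hf, ?_⟩
      unfold otherEnd at ho₁
      rw [if_pos hf] at ho₁
      exact ho₁
    · right
      have hs : G.snd e₁ = v₀ := hi₁.resolve_left hf
      refine ⟨?_, hs⟩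
      unfold otherEnd at ho₁
      rw [if_neg hf] at ho₁
      exact ho₁
  have hor₂ : (G.fst e₂ = v₀ ∧ G.snd e₂ = v₂) ∨ (G.fst e₂ = v₂ ∧ G.snd e₂ = v₀) := by
    by_cases hf : G.fst e₂ = v₀
    · left
      refine ⟨hf, ?_⟩
      unfold otherEnd at ho₂
      rw [if_pos hf] at ho₂
      exact ho₂
    · right
      have hs : G.snd e₂ = v₀ := hi₂.resolve_left hf
      refine ⟨?_, hs⟩
      unfold otherEnd at ho₂
      rw [if_neg hf] at ho₂
      exact ho₂
  have hor₃ : (G.fst e₃ = v₀ ∧ G.snd e₃ = v₂) ∨ (G.fst e₃ = v₂ ∧ G.snd e₃ = v₀) := by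
    by_cases hf : G.fst e₃ = v₀
    · left
      refine ⟨hf, ?_⟩
      unfold otherEnd at ho₃
      rw [if_pos hf] at ho₃
      exact ho₃
    · right
      have hs : G.snd e₃ = v₀ := hi₃.resolve_left hf
      refine ⟨?_, hs⟩
      unfold otherEnd at ho₃
      rw [if_neg hf] at ho₃
      exact ho₃
  -- the incident edges are exactly e₁, e₂, e₃
  have hinc : ∀ e ∈ G.edges, (G.fst e = v₀ ∨ G.snd e = v₀) → e = e₁ ∨ e = e₂ ∨ e = e₃ := by
    intro e₄ he₄ hi₄
    by_contra hne
    push_neg at hne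
    obtain ⟨n1, n2, n3⟩ := hne
    have hwone : ∀ e : β, (G.fst e = v₀ ∨ G.snd e = v₀) →
        1 ≤ (if G.fst e = v₀ then 1 else 0) + (if G.snd e = v₀ then 1 else 0) := by
      intro e h
      rcases h with h | h
      · rw [if_pos h]; exact Nat.le_add_right 1 _
      · rw [if_pos h]; exact Nat.le_add_left 1 _
    have hsub4 : insert e₄ {e₁, e₂, e₃} ⊆ G.edges := by
      intro e he
      rcases Finset.mem_insert.1 he with rfl | he
      · exact he₄
      rcases Finset.mem_insert.1 he with rfl | he
      · exact hm₁
      rcases Finset.mem_insert.1 he with rfl | he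
      · exact hm₂
      rw [Finset.mem_singleton.1 he]
      exact hm₃
    have hge : ∑ e ∈ insert e₄ {e₁, e₂, e₃},
          ((if G.fst e = v₀ then 1 else 0) + (if G.snd e = v₀ then 1 else 0))
        ≤ G.degree v₀ :=
      Finset.sum_le_sum_of_subset hsub4
    have hsum4 : ∑ e ∈ insert e₄ ({e₁, e₂, e₃} : Finset β),
          ((if G.fst e = v₀ then 1 else 0) + (if G.snd e = v₀ then 1 else 0))
        = ((if G.fst e₄ = v₀ then 1 else 0) + (if G.snd e₄ = v₀ then 1 else 0))
          + (((if G.fst e₁ = v₀ then 1 else 0) + (if G.snd e₁ = v₀ then 1 else 0))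
          + (((if G.fst e₂ = v₀ then 1 else 0) + (if G.snd e₂ = v₀ then 1 else 0))
          + ((if G.fst e₃ = v₀ then 1 else 0) + (if G.snd e₃ = v₀ then 1 else 0)))) := by
      rw [Finset.sum_insert (by simp [Finset.mem_insert, n1, n2, n3]),
          Finset.sum_insert (by simp [Finset.mem_insert, he12, he13]),
          Finset.sum_insert (by simp [he23]), Finset.sum_singleton]
    have h4 := hwone e₄ hi₄
    have hq1 := hwone e₁ hi₁
    have hq2 := hwone e₂ hi₂
    have hq3 := hwone e₃ hi₃
    rw [hsum4, hdeg] at hge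
    omega
  have S : Setup G m v₀ v₁ v₂ e₁ e₂ e₃ :=
    ⟨hT, h01, h02, h12, hv₀, he12, he13, he23, hm₁, hm₂, hm₃, hor₁, hor₂, hor₃, hinc⟩
  by_contra hcon
  push_neg at hcon
  have hnot1 : ¬ PMTight ((G.deleteVertex v₀).addEdge e₁ v₁ v₂)
      (Function.update m e₁ ((gainFrom G m v₀ e₁)⁻¹ * gainFrom G m v₀ e₂)) :=
    hcon 0 1 (by decide)
  have hnot2 : ¬ PMTight ((G.deleteVertex v₀).addEdge e₁ v₁ v₂)
      (Function.update m e₁ ((gainFrom G m v₀ e₁)⁻¹ * gainFrom G m v₀ e₃)) :=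
    hcon 0 2 (by decide)
  have hnot3 : ¬ PMTight ((G.deleteVertex v₀).addEdge e₁ v₂ v₂)
      (Function.update m e₁ ((gainFrom G m v₀ e₂)⁻¹ * gainFrom G m v₀ e₃)) :=
    hcon 1 2 (by decide)
  obtain ⟨B₁, hB₁0, hB₁1, hB₁2, hkind₁⟩ := S.extract S.hv₁ S.h01 S.hv₂ S.h02 hnot1
  obtain ⟨B₂, hB₂0, hB₂1, hB₂2, hkind₂⟩ := S.extract S.hv₁ S.h01 S.hv₂ S.h02 hnot2
  obtain ⟨BL, hL0, hL2, hL2', hkindL⟩ := S.extract S.hv₂ S.h02 S.hv₂ S.h02 hnot3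
  have hk₁ : BlkP G m v₁ v₂ ((gainFrom G m v₀ e₁)⁻¹ * gainFrom G m v₀ e₂) B₁ ∨
      BlkB G m v₁ v₂ ((gainFrom G m v₀ e₁)⁻¹ * gainFrom G m v₀ e₂) B₁ := by
    rcases hkind₁ with ht | hp | hb
    · exact absurd (S.claim1 B₁ hB₁0 hB₁1 hB₁2) (by omega)
    · exact Or.inl hp
    · exact Or.inr hb
  have hk₂ : BlkP G m v₁ v₂ ((gainFrom G m v₀ e₁)⁻¹ * gainFrom G m v₀ e₃) B₂ ∨
      BlkB G m v₁ v₂ ((gainFrom G m v₀ e₁)⁻¹ * gainFrom G m v₀ e₃) B₂ := by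
    rcases hkind₂ with ht | hp | hb
    · exact absurd (S.claim1 B₂ hB₂0 hB₂1 hB₂2) (by omega)
    · exact Or.inl hp
    · exact Or.inr hb
  have hg12 : (gainFrom G m v₀ e₁)⁻¹ * gainFrom G m v₀ e₂
      ≠ (gainFrom G m v₀ e₁)⁻¹ * gainFrom G m v₀ e₃ :=
    fun h => S.hbc (mul_left_cancel h)
  rcases hkindL with ht | hp | hb
  · exact S.caseT hg12 BL hL0 hL2 ht B₁ hB₁0 hB₁1 hB₁2 hk₁ B₂ hB₂0 hB₂1 hB₂2 hk₂
  · have h0 := hp.2.2 [] rfl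
    have hfalse : false
        = ((gainFrom G m v₀ e₂)⁻¹ * gainFrom G m v₀ e₃).r := h0
    rw [PM.r_mul, PM.r_inv, gainFrom_r, gainFrom_r] at hfalse
    have hrbc : (m e₂).r = (m e₃).r := by
      cases hA : (m e₂).r <;> cases hB : (m e₃).r <;> simp_all
    exact S.caseRBC hrbc B₁ hB₁0 hB₁1 hB₁2 hk₁ B₂ hB₂0 hB₂1 hB₂2 hk₂
  · have h0 := hb.2.2 [] rfl
    have h1 : (gainFrom G m v₀ e₂)⁻¹ * gainFrom G m v₀ e₃ = 1 := h0.symm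
    exact S.hbc (inv_mul_eq_one.mp h1)

end Crystal
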